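/- arXiv:2507.11034 — 2 statements merged into one kernel-verified Lean document; each statement's English description precedes it below -/
import Mathlib

section
/- For all integers k ≥ 2, r ≥ 4 and n ≥ 9(k²+k+1)+2r, one has ex(n,{kP₃, K_r}) = (k−1)(n−k+1) + ⌊(n−k+1)/2⌋ + e(T(k−1, r−3)). -/
open SimpleGraph

/-- `G` contains a (not necessarily induced) subgraph copy of `H`. -/
def GContains {V W : Type*} (G : SimpleGraph V) (H : SimpleGraph W) : Prop :=
  ∃ f : W ↪ V, ∀ a b, H.Adj a b → G.Adj (f a) (f b)

/-- The number of edges of a graph. -/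
noncomputable def eCount {V : Type*} (G : SimpleGraph V) : ℕ := G.edgeSet.ncard

/-- The Turán number of a "freeness" predicate `P` : the maximum number of edges of a
graph on `n` vertices satisfying `P`. -/
noncomputable def exNum (n : ℕ) (P : SimpleGraph (Fin n) → Prop) : ℕ :=
  sSup {m | ∃ G : SimpleGraph (Fin n), P G ∧ eCount G = m}

/-- The disjoint union of `k` copies of the path on `ℓ` vertices. -/
def kPaths (k ℓ : ℕ) : SimpleGraph (Fin k × Fin ℓ) where
  Adj x y := x.1 = y.1 ∧ ((x.2 : ℕ) + 1 = (y.2 : ℕ) ∨ (y.2 : ℕ) + 1 = (x.2 : ℕ))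
  symm := ⟨fun x y h => ⟨h.1.symm, h.2.symm⟩⟩
  loopless := ⟨fun x h => by obtain ⟨-, h⟩ := h; omega⟩

/-- The linear forest with one path on `len i` vertices for each `i ∈ s`. -/
def linearForest (s : Finset ℕ) (len : ℕ → ℕ) :
    SimpleGraph {p : ℕ × ℕ // p.1 ∈ s ∧ p.2 < len p.1} where
  Adj x y := x.val.1 = y.val.1 ∧ (x.val.2 + 1 = y.val.2 ∨ y.val.2 + 1 = x.val.2)
  symm := ⟨fun x y h => ⟨h.1.symm, h.2.symm⟩⟩
  loopless := ⟨fun x h => by obtain ⟨-, h⟩ := h; omega⟩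

/-- The join `I_a + M_m` of an independent set of `a` vertices with a perfect matching
on `2m` vertices (vertices `2t` and `2t+1` are matched). -/
def joinIM (a m : ℕ) : SimpleGraph (Fin a ⊕ Fin (2 * m)) where
  Adj x y :=
    match x, y with
    | Sum.inl _, Sum.inr _ => True
    | Sum.inr _, Sum.inl _ => True
    | Sum.inl _, Sum.inl _ => False
    | Sum.inr i, Sum.inr j => i ≠ j ∧ (i : ℕ) / 2 = (j : ℕ) / 2
  symm := by
    constructor
    rintro (x | x) (y | y) h
    · exact h.elim
    · trivial
    · trivial
    · exact ⟨h.1.symm, h.2.symm⟩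
  loopless := by
    constructor
    rintro (x | x) h
    · exact h
    · exact h.1 rfl

/-- `E'` is an edge control set of `F`: a set of edges of `F` such that every other edge of
`F` shares an endpoint with some edge of `E'`. -/
def IsEdgeControlSet {V : Type*} (F : SimpleGraph V) (E' : Finset (Sym2 V)) : Prop :=
  (E' : Set (Sym2 V)) ⊆ F.edgeSet ∧
    ∀ e ∈ F.edgeSet, e ∉ E' → ∃ e' ∈ E', ∃ v, v ∈ e ∧ v ∈ e'

/-- The edge control number `β₁(F)`: the minimum size of an edge control set of `F`. -/
noncomputable def edgeControlNumber {V : Type*} (F : SimpleGraph V) : ℕ :=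
  sInf {m | ∃ E' : Finset (Sym2 V), IsEdgeControlSet F E' ∧ E'.card = m}

/-- The number of triangles (copies of `K₃`) in `F`. -/
noncomputable def triCount {V : Type*} (F : SimpleGraph V) : ℕ :=
  {t : Finset V | F.IsNClique 3 t}.ncard

/-- `G` contains no member of the family `𝒢₁(F) = {F[V(F) ∖ S] : S ⊆ V(F), F[S] edgeless}`. -/
def G1FamFree {VF V : Type*} (F : SimpleGraph VF) (G : SimpleGraph V) : Prop :=
  ∀ S : Set VF, (∀ a ∈ S, ∀ b ∈ S, ¬ F.Adj a b) → ¬ GContains G (F.induce Sᶜ)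

/-- `G` contains no member of the family `𝒢₂(F) = {F[V(F) ∖ S] : S ⊆ V(F), e(F[S]) ≤ 1}`. -/
def G2FamFree {VF V : Type*} (F : SimpleGraph VF) (G : SimpleGraph V) : Prop :=
  ∀ S : Set VF, eCount (F.induce S) ≤ 1 → ¬ GContains G (F.induce Sᶜ)

/-- `G` contains no member of the family
`𝓗ᵢ(F) = {F[V(F) ∖ S] : S ⊆ V(F), Δ(F[S]) ≤ 1, e(F[S]) ≤ i}`. -/
def HiFamFree {VF V : Type*} (F : SimpleGraph VF) (i : ℕ) (G : SimpleGraph V) : Prop :=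
  ∀ S : Set VF, (∀ v ∈ S, (F.neighborSet v ∩ S).ncard ≤ 1) →
    eCount (F.induce S) ≤ i → ¬ GContains G (F.induce Sᶜ)

/-- `G` contains no member of the family `𝓗(F) = {F[V(F) ∖ S] : S ⊆ V(F), Δ(F[S]) ≤ 1}`. -/
def HFamFree {VF V : Type*} (F : SimpleGraph VF) (G : SimpleGraph V) : Prop :=
  ∀ S : Set VF, (∀ v ∈ S, (F.neighborSet v ∩ S).ncard ≤ 1) →
    ¬ GContains G (F.induce Sᶜ)

/-- The common neighborhood of `S` outside `S`. -/
def commonNbhd {V : Type*} (G : SimpleGraph V) (S : Set V) : Set V :=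
  {v | v ∉ S ∧ ∀ u ∈ S, G.Adj v u}

/-- The quantity `n_k = (n/3 − C(ℓ,2)) / ((⌈ℓ/2⌉+1)·C(ℓ,⌊ℓ/2⌋)) + kℓ`. -/
noncomputable def nkQ (n k ℓ : ℕ) : ℚ :=
  ((n : ℚ) / 3 - (ℓ.choose 2 : ℚ)) /
    ((((ℓ + 1) / 2 + 1 : ℕ) : ℚ) * (ℓ.choose (ℓ / 2) : ℚ)) + (k : ℚ) * (ℓ : ℚ)

/-- The set of vertices belonging to some `⌊ℓ/2⌋`-set whose common neighborhood outside it
has size at least `n_k`. -/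
def bigA (n k ℓ : ℕ) (G : SimpleGraph (Fin n)) : Set (Fin n) :=
  {v | ∃ S : Finset (Fin n), v ∈ S ∧ S.card = ℓ / 2 ∧
    nkQ n k ℓ ≤ ((commonNbhd G ↑S).ncard : ℚ)}

open Finset

section Aux

variable {n : ℕ} {G : SimpleGraph (Fin n)}

lemma fin3_step (j j' : Fin 3) (h : (j:ℕ)+1=(j':ℕ) ∨ (j':ℕ)+1=(j:ℕ)) :
    (j=0∧j'=1)∨(j=1∧j'=2)∨(j'=0∧j=1)∨(j'=1∧j=2) := by
  have h1 := j.isLt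
  have h2 := j'.isLt
  simp only [Fin.ext_iff]
  simp only [Fin.val_zero, Fin.val_one, Fin.val_two]
  omega

/-- a "good family": m disjoint cherries (P₃'s) -/
def GoodF (G : SimpleGraph (Fin n)) (m : ℕ) (f : Fin m × Fin 3 → Fin n) : Prop :=
  Function.Injective f ∧ ∀ i : Fin m, G.Adj (f (i,1)) (f (i,0)) ∧ G.Adj (f (i,1)) (f (i,2))

lemma goodF_contains {k : ℕ} {f : Fin k × Fin 3 → Fin n} (hf : GoodF G k f) :
    GContains G (kPaths k 3) := by
  refine ⟨⟨f, hf.1⟩, ?_⟩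
  rintro ⟨i, j⟩ ⟨i', j'⟩ (⟨rfl : i = i', hj⟩ : i = i' ∧ ((j : ℕ) + 1 = (j' : ℕ) ∨ (j' : ℕ) + 1 = (j : ℕ)))
  have h2 := hf.2 i
  rcases fin3_step j j' hj with ⟨rfl, rfl⟩ | ⟨rfl, rfl⟩ | ⟨rfl, rfl⟩ | ⟨rfl, rfl⟩
  · exact (h2.1).symm
  · exact h2.2
  · exact h2.1
  · exact (h2.2).symm

/-- extend a good family by one new cherry x–v–y on fresh vertices -/
lemma goodF_cons {m : ℕ} {f : Fin m × Fin 3 → Fin n} (hf : GoodF G m f)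
    {x v y : Fin n} (hxv : G.Adj v x) (hvy : G.Adj v y) (hxy : x ≠ y)
    (hx : ∀ p, f p ≠ x) (hv : ∀ p, f p ≠ v) (hy : ∀ p, f p ≠ y) :
    ∃ g : Fin (m+1) × Fin 3 → Fin n, GoodF G (m+1) g ∧
      (∀ q : Fin (m+1) × Fin 3, g q = x ∨ g q = v ∨ g q = y ∨ ∃ p, f p = g q) := by
  classical
  refine ⟨fun p => if h : (p.1 : ℕ) < m then f (⟨p.1, h⟩, p.2)
    else if p.2 = 0 then x else if p.2 = 1 then v else y, ⟨?_, ?_⟩, ?_⟩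
  · rintro ⟨i, j⟩ ⟨i', j'⟩ h
    by_cases h1 : (i : ℕ) < m <;> by_cases h2 : (i' : ℕ) < m <;>
      simp only [h1, h2, dif_pos, dif_neg, not_false_iff] at h
    · have := hf.1 h
      simp only [Prod.mk.injEq, Fin.mk.injEq] at this
      exact Prod.ext (Fin.ext this.1) this.2
    · exfalso
      split_ifs at h with e1 e2
      exacts [hx _ h, hv _ h, hy _ h]
    · exfalso
      split_ifs at h with e1 e2
      exacts [hx _ h.symm, hv _ h.symm, hy _ h.symm]
    · have hii : i = i' := Fin.ext (by omega)
      subst hii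
      have d1 : v ≠ x := hxv.ne
      have d2 : v ≠ y := hvy.ne
      refine Prod.ext rfl ?_
      fin_cases j <;> fin_cases j' <;> simp_all
  · intro i
    by_cases h1 : (i : ℕ) < m
    · simpa [h1] using hf.2 ⟨i, h1⟩
    · simp only [h1, dif_neg, not_false_iff]
      norm_num
      exact ⟨hxv, hvy⟩
  · rintro ⟨i, j⟩
    by_cases h1 : (i : ℕ) < m
    · exact Or.inr (Or.inr (Or.inr ⟨(⟨i, h1⟩, j), by simp [h1]⟩))
    · simp only [h1, dif_neg, not_false_iff]
      split_ifs <;> simp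


lemma goodF_empty : GoodF G 0 (fun p => (Fin.elim0 p.1 : Fin n)) := by
  constructor
  · rintro ⟨i, j⟩; exact i.elim0
  · rintro i; exact i.elim0

lemma goodF_restrict {m m' : ℕ} {f : Fin m × Fin 3 → Fin n} (h : m' ≤ m)
    (hf : GoodF G m f) :
    GoodF G m' (fun p => f (⟨p.1.1, lt_of_lt_of_le p.1.2 h⟩, p.2)) := by
  constructor
  · rintro ⟨i, j⟩ ⟨i', j'⟩ hh
    have := hf.1 hh
    simp only [Prod.mk.injEq, Fin.mk.injEq] at this
    exact Prod.ext (Fin.ext this.1) this.2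
  · intro i; exact hf.2 _

lemma pack_extend [DecidableRel G.Adj] (k : ℕ) :
    ∀ (a : ℕ) (A : Finset (Fin n)) (m : ℕ) (f : Fin m × Fin 3 → Fin n),
      A.card = a → GoodF G m f → (∀ p, f p ∉ A) → m + a = k →
      (∀ v ∈ A, 3*k - 1 ≤ G.degree v) → GContains G (kPaths k 3) := by
  intro a
  induction a with
  | zero =>
    intro A m f hAc hf _ hm _
    have : m = k := by omega
    subst this
    exact goodF_contains hf
  | succ a ih =>
    intro A m f hAc hf hfA hm hdeg
    have hA : A.Nonempty := card_pos.mp (by omega)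
    obtain ⟨v, hv⟩ := hA
    classical
    set R : Finset (Fin n) :=
      G.neighborFinset v \ ((Finset.univ.image f) ∪ A.erase v) with hR
    have himg : (Finset.univ.image f).card ≤ 3 * m := by
      calc (Finset.univ.image f).card ≤ (Finset.univ : Finset (Fin m × Fin 3)).card :=
            card_image_le
        _ = 3 * m := by simp [Fintype.card_prod, mul_comm]
    have hRcard : 2 ≤ R.card := by
      have h1 : ((Finset.univ.image f) ∪ A.erase v).card ≤ 3 * m + a := by
        calc ((Finset.univ.image f) ∪ A.erase v).card
            ≤ (Finset.univ.image f).card + (A.erase v).card := card_union_le _ _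
          _ ≤ 3 * m + a := by
              have := Finset.card_erase_of_mem hv
              omega
      have h2 : (G.neighborFinset v).card - ((Finset.univ.image f) ∪ A.erase v).card
          ≤ R.card := by
        rw [hR]; exact Finset.le_card_sdiff _ _
      have h3 : 3 * k - 1 ≤ (G.neighborFinset v).card := by
        rw [G.card_neighborFinset_eq_degree]; exact hdeg v hv
      omega
    obtain ⟨x, hx⟩ := card_pos.mp (by omega : 0 < R.card)
    have : 0 < (R.erase x).card := by
      have := Finset.card_erase_of_mem hx; omega
    obtain ⟨y, hy⟩ := card_pos.mp this
    have hyR : y ∈ R := mem_of_mem_erase hy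
    have hxy : x ≠ y := fun h => (ne_of_mem_erase hy) h.symm
    have hxN : G.Adj v x := by
      have := (mem_sdiff.mp hx).1; rwa [mem_neighborFinset] at this
    have hyN : G.Adj v y := by
      have := (mem_sdiff.mp hyR).1; rwa [mem_neighborFinset] at this
    have hxout := (mem_sdiff.mp hx).2
    have hyout := (mem_sdiff.mp hyR).2
    rw [mem_union] at hxout hyout
    push_neg at hxout hyout
    have hfx : ∀ p, f p ≠ x := fun p h =>
      hxout.1 (mem_image.mpr ⟨p, mem_univ p, h⟩)
    have hfy : ∀ p, f p ≠ y := fun p h =>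
      hyout.1 (mem_image.mpr ⟨p, mem_univ p, h⟩)
    have hfv : ∀ p, f p ≠ v := fun p h => hfA p (h ▸ hv)
    obtain ⟨g, hg, hgr⟩ := goodF_cons hf hxN hyN hxy hfx hfv hfy
    refine ih (A.erase v) (m+1) g ?_ hg ?_ (by omega) ?_
    · rw [Finset.card_erase_of_mem hv]; omega
    · intro q hq
      rcases hgr q with h | h | h | ⟨p, hp⟩
      · exact hxout.2 (h ▸ hq)
      · exact (Finset.notMem_erase v A) (h ▸ hq)
      · exact hyout.2 (h ▸ hq)
      · exact hfA p (mem_of_mem_erase (hp ▸ hq))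
    · intro u hu; exact hdeg u (mem_of_mem_erase hu)

lemma no_k_highdeg [DecidableRel G.Adj] {k : ℕ}
    (hfree : ¬GContains G (kPaths k 3)) (A : Finset (Fin n))
    (hdeg : ∀ v ∈ A, 3*k - 1 ≤ G.degree v) : A.card ≤ k - 1 := by
  by_contra h
  push_neg at h
  have hk : k ≤ A.card := by omega
  obtain ⟨B, hBA, hB⟩ := Finset.exists_subset_card_eq hk
  exact hfree (pack_extend k k B 0 (fun p => (Fin.elim0 p.1 : Fin n)) hB goodF_empty
    (fun p => (p.1.elim0 : _)) (by omega) (fun v hv => hdeg v (hBA hv)))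

section DecAux
variable [DecidableRel G.Adj]



lemma edges_meeting_le (D : Finset (Fin n)) :
    #(G.edgeFinset.filter (fun e => ∃ v ∈ D, v ∈ e)) ≤ ∑ v ∈ D, G.degree v := by
  classical
  have hsub : G.edgeFinset.filter (fun e => ∃ v ∈ D, v ∈ e) ⊆
      D.biUnion (fun v => G.incidenceFinset v) := by
    intro e he
    rw [mem_filter] at he
    obtain ⟨heE, v, hvD, hve⟩ := he
    refine mem_biUnion.mpr ⟨v, hvD, ?_⟩
    rw [G.incidenceFinset_eq_filter, mem_filter]
    exact ⟨heE, hve⟩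
  calc #(G.edgeFinset.filter (fun e => ∃ v ∈ D, v ∈ e))
      ≤ #(D.biUnion (fun v => G.incidenceFinset v)) := card_le_card hsub
    _ ≤ ∑ v ∈ D, #(G.incidenceFinset v) := card_biUnion_le
    _ = ∑ v ∈ D, G.degree v := by
        exact Finset.sum_congr rfl (fun v _ => G.card_incidenceFinset_eq_degree v)

lemma edges_crossing_le (D : Finset (Fin n)) :
    #(G.edgeFinset.filter (fun e => (∃ v ∈ D, v ∈ e) ∧ ¬ (∀ v ∈ e, v ∈ D)))
      ≤ #D * #Dᶜ := by
  classical
  have hsub : G.edgeFinset.filter (fun e => (∃ v ∈ D, v ∈ e) ∧ ¬ (∀ v ∈ e, v ∈ D)) ⊆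
      D.biUnion (fun v => ((G.neighborFinset v) \ D).image (fun w => s(v, w))) := by
    intro e he
    rw [mem_filter] at he
    obtain ⟨heE, ⟨v, hvD, hve⟩, hnot⟩ := he
    push_neg at hnot
    obtain ⟨w, hwe, hwD⟩ := hnot
    obtain ⟨u, rfl⟩ := Sym2.mem_iff_exists.mp hve
    have hadj : G.Adj v u := (G.mem_edgeSet).mp (mem_edgeFinset.mp heE)
    have hwu : w = u := by
      rcases Sym2.mem_iff.mp hwe with h | h
      · exact absurd (h ▸ hvD) hwD
      · exact h
    subst hwu
    exact mem_biUnion.mpr ⟨v, hvD, mem_image.mpr ⟨w,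
      mem_sdiff.mpr ⟨(G.mem_neighborFinset v w).mpr hadj, hwD⟩, rfl⟩⟩
  calc _ ≤ #(D.biUnion (fun v => ((G.neighborFinset v) \ D).image (fun w => s(v, w)))) :=
        card_le_card hsub
    _ ≤ ∑ v ∈ D, #(((G.neighborFinset v) \ D).image (fun w => s(v, w))) := card_biUnion_le
    _ ≤ ∑ v ∈ D, #Dᶜ := by
        refine Finset.sum_le_sum (fun v _ => ?_)
        refine le_trans card_image_le (card_le_card ?_)
        intro w hw
        simpa using (mem_sdiff.mp hw).2
    _ = #D * #Dᶜ := by rw [Finset.sum_const, smul_eq_mul]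

/-- in a cherry-free region the edges fully inside form a matching -/
lemma matching_bound (T : Finset (Fin n))
    (hT : ∀ v x y : Fin n, v ∈ T → x ∈ T → y ∈ T → G.Adj v x → G.Adj v y → x = y) :
    2 * #(G.edgeFinset.filter (fun e => ∀ v ∈ e, v ∈ T)) ≤ #T := by
  classical
  set E3 := G.edgeFinset.filter (fun e => ∀ v ∈ e, v ∈ T) with hE3
  have key : ∑ e ∈ E3, #(T.filter (· ∈ e)) = ∑ v ∈ T, #(E3.filter (fun e => v ∈ e)) := by
    simp only [Finset.card_filter]
    exact Finset.sum_comm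
  have left : ∀ e ∈ E3, #(T.filter (· ∈ e)) = 2 := by
    intro e
    induction e using Sym2.ind with
    | _ a b =>
      intro he
      rw [hE3, mem_filter] at he
      obtain ⟨heE, hin⟩ := he
      have hadj : G.Adj a b := (G.mem_edgeSet).mp (mem_edgeFinset.mp heE)
      have : T.filter (· ∈ s(a,b)) = {a, b} := by
        ext v
        simp only [mem_filter, Sym2.mem_iff, mem_insert, mem_singleton]
        constructor
        · rintro ⟨-, h⟩; exact h
        · rintro (rfl | rfl)
          · exact ⟨hin _ (Sym2.mem_iff.mpr (Or.inl rfl)), Or.inl rfl⟩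
          · exact ⟨hin _ (Sym2.mem_iff.mpr (Or.inr rfl)), Or.inr rfl⟩
      rw [this, Finset.card_insert_of_notMem (by simpa using hadj.ne), card_singleton]
  have right : ∀ v ∈ T, #(E3.filter (fun e => v ∈ e)) ≤ 1 := by
    intro v hv
    rw [Finset.card_le_one]
    intro e1 he1 e2 he2
    rw [mem_filter] at he1 he2
    obtain ⟨he1', hv1⟩ := he1
    obtain ⟨he2', hv2⟩ := he2
    rw [hE3, mem_filter] at he1' he2'
    obtain ⟨w1, rfl⟩ := Sym2.mem_iff_exists.mp hv1
    obtain ⟨w2, rfl⟩ := Sym2.mem_iff_exists.mp hv2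
    have a1 : G.Adj v w1 := (G.mem_edgeSet).mp (mem_edgeFinset.mp he1'.1)
    have a2 : G.Adj v w2 := (G.mem_edgeSet).mp (mem_edgeFinset.mp he2'.1)
    have w1T : w1 ∈ T := he1'.2 w1 (Sym2.mem_iff.mpr (Or.inr rfl))
    have w2T : w2 ∈ T := he2'.2 w2 (Sym2.mem_iff.mpr (Or.inr rfl))
    rw [hT v w1 w2 hv w1T w2T a1 a2]
  calc 2 * #E3 = ∑ e ∈ E3, 2 := by rw [Finset.sum_const, smul_eq_mul, mul_comm]
    _ = ∑ e ∈ E3, #(T.filter (· ∈ e)) := (Finset.sum_congr rfl left).symm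
    _ = ∑ v ∈ T, #(E3.filter (fun e => v ∈ e)) := key
    _ ≤ ∑ v ∈ T, 1 := Finset.sum_le_sum right
    _ = #T := by simp

lemma clique_contains {r : ℕ} {S : Finset (Fin n)} (h : G.IsNClique r S) :
    GContains G (⊤ : SimpleGraph (Fin r)) := by
  have hc : Fintype.card {x // x ∈ S} = r := by rw [Fintype.card_coe, h.2]
  let e := (Fintype.equivFinOfCardEq hc).symm
  refine ⟨⟨fun i => (e i : Fin n), ?_⟩, ?_⟩
  · intro i j hij
    have := Subtype.val_injective hij
    exact e.injective this
  · intro a b hab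
    simp only [top_adj] at hab
    have hne : (e a : Fin n) ≠ (e b : Fin n) :=
      fun hh => hab (e.injective (Subtype.val_injective hh))
    exact h.1 (e a).2 (e b).2 hne

lemma nonnbr_count (q : Fin n) :
    #(Finset.univ.filter (fun w => w ≠ q ∧ ¬G.Adj q w)) = n - 1 - G.degree q := by
  classical
  have : Finset.univ.filter (fun w => w ≠ q ∧ ¬G.Adj q w) =
      Finset.univ \ (insert q (G.neighborFinset q)) := by
    ext w
    simp only [mem_filter, mem_univ, true_and, mem_sdiff, mem_insert,
      mem_neighborFinset, not_or]
  rw [this, Finset.card_sdiff_of_subset (subset_univ _), Finset.card_univ, Fintype.card_fin,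
    Finset.card_insert_of_notMem (by simp), G.card_neighborFinset_eq_degree]
  omega

lemma degree_le_pred (v : Fin n) : G.degree v ≤ n - 1 := by
  have := G.degree_lt_card_verts v
  rw [Fintype.card_fin] at this
  omega

lemma edges_inside_le_turan {D : Finset (Fin n)} {c q : ℕ} (hq : 0 < q) (hc : 0 < c)
    (hD : #D = c)
    (hcf : ∀ S : Finset (Fin n), (↑S : Set (Fin n)) ⊆ ↑D → ¬G.IsNClique (q+1) S) :
    #(G.edgeFinset.filter (fun e => ∀ v ∈ e, v ∈ D)) ≤ #(turanGraph c q).edgeFinset := by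
  classical
  have hcard : Fintype.card {x // x ∈ D} = c := by rw [Fintype.card_coe, hD]
  set e : Fin c ≃ {x // x ∈ D} := (Fintype.equivFinOfCardEq hcard).symm with he
  set g : Fin c → Fin n := fun i => (e i : Fin n) with hg
  have hginj : Function.Injective g := fun i j h =>
    e.injective (Subtype.val_injective h)
  set H : SimpleGraph (Fin c) := G.comap g with hH
  haveI : DecidableRel H.Adj := Classical.decRel _
  have hHcf : H.CliqueFree (q + 1) := by
    intro S hS
    refine hcf (S.image g) ?_ ⟨?_, ?_⟩
    · intro x hx
      simp only [coe_image, Set.mem_image, mem_coe] at hx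
      obtain ⟨i, _, rfl⟩ := hx
      exact (e i).2
    · intro x hx y hy hxy
      simp only [coe_image, Set.mem_image, mem_coe] at hx hy
      obtain ⟨i, hi, rfl⟩ := hx
      obtain ⟨j, hj, rfl⟩ := hy
      have hij : i ≠ j := fun hh => hxy (hh ▸ rfl)
      exact hS.1 hi hj hij
    · rw [Finset.card_image_of_injective _ hginj, hS.2]
  have hTuran : #H.edgeFinset ≤ #(turanGraph c q).edgeFinset :=
    (isTuranMaximal_turanGraph (n := c) hq).2 hHcf
  refine le_trans ?_ hTuran
  set g' : Fin n → Fin c :=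
    fun v => if h : v ∈ D then e.symm ⟨v, h⟩ else ⟨0, hc⟩ with hg'
  have hge : ∀ v : Fin n, ∀ h : v ∈ D, g (g' v) = v := by
    intro v h
    simp only [hg', dif_pos h, hg, Equiv.apply_symm_apply]
  apply Finset.card_le_card_of_injOn (fun ed => Sym2.map g' ed)
  · intro ed
    induction ed using Sym2.ind with
    | _ a b =>
      intro hed
      rw [mem_coe, mem_filter] at hed
      obtain ⟨hE, hin⟩ := hed
      have ha : a ∈ D := hin a (Sym2.mem_iff.mpr (Or.inl rfl))
      have hb : b ∈ D := hin b (Sym2.mem_iff.mpr (Or.inr rfl))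
      have hadj : G.Adj a b := (G.mem_edgeSet).mp (mem_edgeFinset.mp hE)
      beta_reduce
      rw [mem_coe, Sym2.map_pair_eq, mem_edgeFinset, mem_edgeSet]
      show G.Adj (g (g' a)) (g (g' b))
      rw [hge a ha, hge b hb]
      exact hadj
  · intro e1 h1 e2 h2 heq
    simp only [coe_filter, Set.mem_setOf_eq] at h1 h2
    induction e1 using Sym2.ind with
    | _ a b =>
      induction e2 using Sym2.ind with
      | _ a' b' =>
        have ha : a ∈ D := h1.2 a (Sym2.mem_iff.mpr (Or.inl rfl))
        have hb : b ∈ D := h1.2 b (Sym2.mem_iff.mpr (Or.inr rfl))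
        have ha' : a' ∈ D := h2.2 a' (Sym2.mem_iff.mpr (Or.inl rfl))
        have hb' : b' ∈ D := h2.2 b' (Sym2.mem_iff.mpr (Or.inr rfl))
        simp only [Sym2.map_pair_eq, Sym2.eq_iff] at heq ⊢
        rcases heq with ⟨u1, u2⟩ | ⟨u1, u2⟩
        · left
          constructor
          · rw [← hge a ha, ← hge a' ha', u1]
          · rw [← hge b hb, ← hge b' hb', u2]
        · right
          constructor
          · rw [← hge a ha, ← hge b' hb', u1]
          · rw [← hge b hb, ← hge a' ha', u2]

end DecAux
end Aux

lemma arith_pack (k : ℕ) (hk : 2 ≤ k) : ∃ K, 2*k ≤ K ∧ (k-2)*(k-2) ≤ K ∧ (k-1)*(k-2) ≤ K ∧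
    ∀ n, 9*(k^2+k+1) ≤ n → 2*K + 20*k ≤ n := by
  refine ⟨k*k, ?_, ?_, ?_, ?_⟩
  · exact Nat.mul_le_mul_right k hk
  · exact Nat.mul_le_mul (Nat.sub_le k 2) (Nat.sub_le k 2)
  · exact Nat.mul_le_mul (Nat.sub_le k 1) (Nat.sub_le k 2)
  · intro n hn
    have h1 : k^2 = k*k := sq k
    have h2 : 2*k ≤ k*k := Nat.mul_le_mul_right k hk
    rw [h1] at hn
    nlinarith

lemma arithA (k n s M X t : ℕ) (hk : 2 ≤ k) (hn : 9*(k^2+k+1) ≤ n)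
    (hs : s ≤ k-2) (hM : M ≤ k-1-s) (hX : 2*X ≤ n - s - 3*M) :
    s*(n-1) + 3*(M*(3*k-2)) + X ≤ (k-1)*(n-k+1) + (n-k+1)/2 + t := by
  obtain ⟨K, hK1, hK2, hK3, hKn⟩ := arith_pack k hk
  have hKn' := hKn n hn
  have hkn : k ≤ n := by omega
  have R1 : s*(n-1) + (k-2-s)*(n-1) = (k-2)*(n-1) := by
    rw [← Nat.add_mul]
    congr 1
    omega
  have R2 : M*(3*k-2) ≤ (k-1-s)*(3*k-2) := Nat.mul_le_mul hM (le_refl _)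
  have R3 : (k-1-s)*(3*k-2) = (k-2-s)*(3*k-2) + (3*k-2) := by
    have : k-1-s = (k-2-s) + 1 := by omega
    rw [this, Nat.add_mul, one_mul]
  have R4 : 3*((k-2-s)*(3*k-2)) ≤ (k-2-s)*(n-1) := by
    rw [mul_left_comm]
    exact Nat.mul_le_mul_left _ (by omega)
  have R5 : (k-2)*(n-1) = (k-2)*(n-k+1) + (k-2)*(k-2) := by
    have : n-1 = (n-k+1) + (k-2) := by omega
    rw [this, Nat.mul_add]
  have R6 : (k-1)*(n-k+1) = (k-2)*(n-k+1) + (n-k+1) := by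
    have : k-1 = (k-2) + 1 := by omega
    rw [this, Nat.add_mul, one_mul]
  -- now all linear in the atoms
  omega

lemma arithC (k n t : ℕ) (hk : 2 ≤ k) (hn : 9*(k^2+k+1) ≤ n) :
    (k-1)*(n-1) ≤ (k-1)*(n-k+1) + (n-k+1)/2 + t := by
  obtain ⟨K, hK1, hK2, hK3, hKn⟩ := arith_pack k hk
  have hKn' := hKn n hn
  have R1 : (k-1)*(n-1) = (k-1)*(n-k+1) + (k-1)*(k-2) := by
    have : n-1 = (n-k+1) + (k-2) := by omega
    rw [this, Nat.mul_add]
  omega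


set_option maxHeartbeats 1000000 in
theorem upper_bound {n k r : ℕ} (hk : 2 ≤ k) (hr : 4 ≤ r)
    (hn : 9 * (k ^ 2 + k + 1) + 2 * r ≤ n)
    (G : SimpleGraph (Fin n)) [DecidableRel G.Adj]
    (h1 : ¬ GContains G (kPaths k 3)) (h2 : ¬ GContains G (⊤ : SimpleGraph (Fin r))) :
    (#G.edgeFinset) ≤ (k-1)*(n-k+1) + (n-k+1)/2 + #(turanGraph (k-1) (r-3)).edgeFinset := by
  classical
  have hn' : 9*(k^2+k+1) ≤ n := by omega
  have hn0 : 0 < n := by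
    have : 0 < 9*(k^2+k+1) := by positivity
    omega
  set t := #(turanGraph (k-1) (r-3)).edgeFinset with ht
  -- the set of high-degree vertices
  set D : Finset (Fin n) := Finset.univ.filter (fun v => 3*k - 1 ≤ G.degree v) with hDdef
  have hDdeg : ∀ v ∈ D, 3*k - 1 ≤ G.degree v := by
    intro v hv; rw [hDdef, mem_filter] at hv; exact hv.2
  have hDcdeg : ∀ v ∈ Dᶜ, G.degree v ≤ 3*k - 2 := by
    intro v hv
    rw [Finset.mem_compl, hDdef, mem_filter] at hv
    push_neg at hv
    have := hv (mem_univ v)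
    omega
  set s := #D with hs
  have hsk : s ≤ k - 1 := no_k_highdeg h1 D hDdeg
  have hDc : #Dᶜ = n - s := by
    rw [Finset.card_compl, Fintype.card_fin]
  -- maximum packing inside Dᶜ
  set P : Set ℕ := {m | ∃ f : Fin m × Fin 3 → Fin n, GoodF G m f ∧ ∀ p, f p ∈ Dᶜ} with hP
  have hP0 : 0 ∈ P := ⟨fun p => (Fin.elim0 p.1 : Fin n), goodF_empty, fun p => p.1.elim0⟩
  have hPub : ∀ m ∈ P, m ≤ k - 1 - s := by
    rintro m ⟨f, hf, hfR⟩
    by_contra hcon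
    push_neg at hcon
    have hmks : k - s ≤ m := by omega
    exfalso
    apply h1
    refine pack_extend k s D (k - s)
      (fun p => f (⟨p.1.1, lt_of_lt_of_le p.1.2 hmks⟩, p.2)) rfl
      (goodF_restrict hmks hf) ?_ (by omega) hDdeg
    intro p
    have := hfR (⟨p.1.1, lt_of_lt_of_le p.1.2 hmks⟩, p.2)
    rw [Finset.mem_compl] at this
    exact this
  have hPbdd : BddAbove P := ⟨k, fun m hm => le_trans (hPub m hm) (by omega)⟩
  set M := sSup P with hM
  have hMP : M ∈ P := Nat.sSup_mem ⟨0, hP0⟩ hPbdd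
  have hMub : ∀ m ∈ P, m ≤ M := fun m hm => le_csSup hPbdd hm
  have hMle : M ≤ k - 1 - s := hPub M hMP
  obtain ⟨f0, hf0, hf0R⟩ := hMP
  set C : Finset (Fin n) := Finset.univ.image f0 with hC
  have hCcard : #C = 3 * M := by
    rw [hC, Finset.card_image_of_injective _ hf0.1, Finset.card_univ,
      Fintype.card_prod, Fintype.card_fin, Fintype.card_fin]
    ring
  have hCsub : C ⊆ Dᶜ := by
    intro x hx
    rw [hC, mem_image] at hx
    obtain ⟨p, _, rfl⟩ := hx
    exact hf0R p
  -- the rest is cherry-free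
  set T : Finset (Fin n) := Dᶜ \ C with hT
  have hTcard : #T = n - s - 3*M := by
    rw [hT, Finset.card_sdiff_of_subset hCsub, hDc, hCcard]
  have hcherry : ∀ v x y : Fin n, v ∈ T → x ∈ T → y ∈ T →
      G.Adj v x → G.Adj v y → x = y := by
    intro v x y hv hx hy hvx hvy
    by_contra hxy
    rw [hT, mem_sdiff] at hv hx hy
    have hfx : ∀ p, f0 p ≠ x := fun p hp => hx.2 (hp ▸ mem_image_of_mem f0 (mem_univ p))
    have hfv : ∀ p, f0 p ≠ v := fun p hp => hv.2 (hp ▸ mem_image_of_mem f0 (mem_univ p))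
    have hfy : ∀ p, f0 p ≠ y := fun p hp => hy.2 (hp ▸ mem_image_of_mem f0 (mem_univ p))
    obtain ⟨g, hg, hgr⟩ := goodF_cons hf0 hvx hvy hxy hfx hfv hfy
    have : M + 1 ∈ P := by
      refine ⟨g, hg, ?_⟩
      intro p
      rcases hgr p with h | h | h | ⟨p', hp'⟩
      · exact h ▸ hx.1
      · exact h ▸ hv.1
      · exact h ▸ hy.1
      · exact hp' ▸ hf0R p'
    have := hMub _ this
    omega
  -- global edge split
  have hsplit : #(G.edgeFinset.filter (fun e => ∃ v ∈ D, v ∈ e)) +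
      #(G.edgeFinset.filter (fun e => ¬ ∃ v ∈ D, v ∈ e)) = #G.edgeFinset :=
    Finset.card_filter_add_card_filter_not _
  -- edges avoiding D lie in Dᶜ; split them by C
  set Eout := G.edgeFinset.filter (fun e => ¬ ∃ v ∈ D, v ∈ e) with hEout
  have hEoutsplit : #(Eout.filter (fun e => ∃ x ∈ C, x ∈ e)) +
      #(Eout.filter (fun e => ¬ ∃ x ∈ C, x ∈ e)) = #Eout :=
    Finset.card_filter_add_card_filter_not _
  have hEoutC : #(Eout.filter (fun e => ∃ x ∈ C, x ∈ e)) ≤ 3*(M*(3*k-2)) := by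
    have hsub : Eout.filter (fun e => ∃ x ∈ C, x ∈ e) ⊆
        G.edgeFinset.filter (fun e => ∃ x ∈ C, x ∈ e) := by
      intro e he
      rw [mem_filter] at he ⊢
      exact ⟨(mem_filter.mp he.1).1, he.2⟩
    calc #(Eout.filter (fun e => ∃ x ∈ C, x ∈ e))
        ≤ #(G.edgeFinset.filter (fun e => ∃ x ∈ C, x ∈ e)) := card_le_card hsub
      _ ≤ ∑ x ∈ C, G.degree x := edges_meeting_le C
      _ ≤ ∑ x ∈ C, (3*k-2) := Finset.sum_le_sum (fun x hx => hDcdeg x (hCsub hx))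
      _ = 3*(M*(3*k-2)) := by
          rw [Finset.sum_const, smul_eq_mul, hCcard]; ring
  have hEoutT : #(Eout.filter (fun e => ¬ ∃ x ∈ C, x ∈ e)) ≤
      #(G.edgeFinset.filter (fun e => ∀ v ∈ e, v ∈ T)) := by
    apply card_le_card
    intro e he
    rw [mem_filter] at he
    obtain ⟨he1, he2⟩ := he
    rw [hEout, mem_filter] at he1
    obtain ⟨heE, heD⟩ := he1
    rw [mem_filter]
    refine ⟨heE, ?_⟩
    intro v hv
    rw [hT, mem_sdiff, Finset.mem_compl]
    constructor
    · intro hvD; exact heD ⟨v, hvD, hv⟩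
    · intro hvC; exact he2 ⟨v, hvC, hv⟩
  have hmatch : 2 * #(G.edgeFinset.filter (fun e => ∀ v ∈ e, v ∈ T)) ≤ #T :=
    matching_bound T hcherry
  -- case on s
  rcases Nat.lt_or_ge s (k-1) with hcase | hcase
  · -- Case A : s ≤ k - 2
    have hsA : s ≤ k - 2 := by omega
    have hmeet : #(G.edgeFinset.filter (fun e => ∃ v ∈ D, v ∈ e)) ≤ s * (n-1) := by
      calc #(G.edgeFinset.filter (fun e => ∃ v ∈ D, v ∈ e))
          ≤ ∑ v ∈ D, G.degree v := edges_meeting_le D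
        _ ≤ ∑ v ∈ D, (n-1) := Finset.sum_le_sum (fun v _ => degree_le_pred v)
        _ = s * (n-1) := by rw [Finset.sum_const, smul_eq_mul]
    have hX : 2 * #(G.edgeFinset.filter (fun e => ∀ v ∈ e, v ∈ T)) ≤ n - s - 3*M := by
      rw [← hTcard]; exact hmatch
    have := arithA k n s M (#(G.edgeFinset.filter (fun e => ∀ v ∈ e, v ∈ T))) t
      hk hn' hsA hMle hX
    omega
  · -- Case B/C : s = k - 1
    have hsB : s = k - 1 := le_antisymm hsk hcase
    have hM0 : M = 0 := by omega
    have hC0 : C = ∅ := by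
      rw [← Finset.card_eq_zero, hCcard, hM0]
    have hTD : T = Dᶜ := by rw [hT, hC0, Finset.sdiff_empty]
    -- split the edges meeting D into: inside D, crossing
    have hmeetsplit : #((G.edgeFinset.filter (fun e => ∃ v ∈ D, v ∈ e)).filter
          (fun e => ∀ v ∈ e, v ∈ D)) +
        #((G.edgeFinset.filter (fun e => ∃ v ∈ D, v ∈ e)).filter
          (fun e => ¬ ∀ v ∈ e, v ∈ D)) =
        #(G.edgeFinset.filter (fun e => ∃ v ∈ D, v ∈ e)) :=
      Finset.card_filter_add_card_filter_not _
    have hcross : #((G.edgeFinset.filter (fun e => ∃ v ∈ D, v ∈ e)).filter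
        (fun e => ¬ ∀ v ∈ e, v ∈ D)) ≤ (k-1) * (n-k+1) := by
      have := edges_crossing_le (G := G) D
      rw [← Finset.filter_filter] at this
      have hDc' : #Dᶜ = n-k+1 := by
        rw [hDc, hsB]; omega
      rw [hDc', ← hs, hsB] at this
      exact this
    have hinsub : ((G.edgeFinset.filter (fun e => ∃ v ∈ D, v ∈ e)).filter
        (fun e => ∀ v ∈ e, v ∈ D)) ⊆ G.edgeFinset.filter (fun e => ∀ v ∈ e, v ∈ D) := by
      intro e he
      rw [mem_filter] at he ⊢
      exact ⟨(mem_filter.mp he.1).1, he.2⟩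
    have hEoutall : #Eout ≤ #(G.edgeFinset.filter (fun e => ∀ v ∈ e, v ∈ T)) := by
      have : Eout.filter (fun e => ¬ ∃ x ∈ C, x ∈ e) = Eout := by
        apply Finset.filter_true_of_mem
        intro e he
        rintro ⟨x, hxC, -⟩
        rw [hC0] at hxC
        exact absurd hxC (Finset.notMem_empty x)
      rw [← this]
      exact hEoutT
    by_cases hclq : ∃ Q : Finset (Fin n), (↑Q : Set (Fin n)) ⊆ ↑D ∧ G.IsNClique (r-2) Q
    · -- Case C : a big clique inside D
      obtain ⟨Q, hQD, hQ⟩ := hclq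
      have hQD' : Q ⊆ D := by
        intro q hq
        exact_mod_cast hQD (by exact_mod_cast hq)
      have hQcard : #Q = r - 2 := hQ.2
      have hQle : r - 2 ≤ s := hQcard ▸ card_le_card hQD'
      -- every edge inside T has an endpoint not adjacent to some q ∈ Q
      set Bad : Finset (Fin n) := Dᶜ.filter (fun w => ∃ q ∈ Q, ¬ G.Adj q w) with hBad
      have hpick : ∀ e ∈ G.edgeFinset.filter (fun e => ∀ v ∈ e, v ∈ T),
          ∃ w, w ∈ e ∧ w ∈ Bad := by
        intro e
        induction e using Sym2.ind with
        | _ a b =>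
          intro he
          rw [mem_filter] at he
          obtain ⟨heE, hin⟩ := he
          have hadj : G.Adj a b := (G.mem_edgeSet).mp (mem_edgeFinset.mp heE)
          have haT : a ∈ T := hin a (Sym2.mem_iff.mpr (Or.inl rfl))
          have hbT : b ∈ T := hin b (Sym2.mem_iff.mpr (Or.inr rfl))
          rw [hTD] at haT hbT
          by_contra hcon
          push_neg at hcon
          have hab : ∀ w, w ∈ (s(a,b) : Sym2 (Fin n)) → ∀ q ∈ Q, G.Adj q w := by
            intro w hw q hq
            by_contra hnadj
            have hwDc : w ∈ Dᶜ := by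
              rcases Sym2.mem_iff.mp hw with rfl | rfl
              exacts [haT, hbT]
            exact hcon w hw (by rw [hBad, mem_filter]; exact ⟨hwDc, q, hq, hnadj⟩)
          -- build a K_r
          have haQ : a ∉ Q := by
            intro haQ'
            have := haT
            rw [Finset.mem_compl] at this
            exact this (hQD' haQ')
          have hbQ : b ∉ Q := by
            intro hbQ'
            have := hbT
            rw [Finset.mem_compl] at this
            exact this (hQD' hbQ')
          have hclique1 : G.IsNClique (r-2+1) (insert b Q) :=
            hQ.insert (fun q hq => ((hab b (Sym2.mem_iff.mpr (Or.inr rfl)) q hq).symm))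
          have hclique2 : G.IsNClique (r-2+1+1) (insert a (insert b Q)) := by
            apply hclique1.insert
            intro c hc
            rcases Finset.mem_insert.mp hc with rfl | hcQ
            · exact hadj
            · exact (hab a (Sym2.mem_iff.mpr (Or.inl rfl)) c hcQ).symm
          have : G.IsNClique r (insert a (insert b Q)) := by
            have : r - 2 + 1 + 1 = r := by omega
            rwa [this] at hclique2
          exact h2 (clique_contains this)
      -- edges inside T inject into Bad
      have hTinj : #(G.edgeFinset.filter (fun e => ∀ v ∈ e, v ∈ T)) ≤ #Bad := by
        apply Finset.card_le_card_of_injOn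
          (fun e => if h : ∃ w, w ∈ e ∧ w ∈ Bad then h.choose else ⟨0, hn0⟩)
        · intro e he
          have hp := hpick e he
          simp only [dif_pos hp]
          exact hp.choose_spec.2
        · intro e1 h1' e2 h2' heq
          simp only [mem_coe] at h1' h2'
          have hp1 := hpick e1 h1'
          have hp2 := hpick e2 h2'
          simp only [dif_pos hp1, dif_pos hp2] at heq
          obtain ⟨hw1, -⟩ := hp1.choose_spec
          obtain ⟨hw2, -⟩ := hp2.choose_spec
          set w := hp1.choose with hw
          rw [← heq] at hw2
          -- w belongs to both edges; both edges are matching edges in T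
          obtain ⟨u1, he1u⟩ := Sym2.mem_iff_exists.mp hw1
          obtain ⟨u2, he2u⟩ := Sym2.mem_iff_exists.mp hw2
          rw [mem_filter] at h1' h2'
          have a1 : G.Adj w u1 := by
            have := mem_edgeFinset.mp h1'.1
            rw [he1u] at this
            exact (G.mem_edgeSet).mp this
          have a2 : G.Adj w u2 := by
            have := mem_edgeFinset.mp h2'.1
            rw [he2u] at this
            exact (G.mem_edgeSet).mp this
          have hu : u1 = u2 := by
            apply hcherry w u1 u2
            · exact h1'.2 w hw1
            · apply h1'.2 u1
              rw [he1u]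
              exact Sym2.mem_iff.mpr (Or.inr rfl)
            · apply h2'.2 u2
              rw [he2u]
              exact Sym2.mem_iff.mpr (Or.inr rfl)
            · exact a1
            · exact a2
          rw [he1u, he2u, hu]
      have hBadle : #Bad ≤ ∑ q ∈ Q, (n - 1 - G.degree q) := by
        have hsub : Bad ⊆ Q.biUnion
            (fun q => Finset.univ.filter (fun w => w ≠ q ∧ ¬G.Adj q w)) := by
          intro w hw
          rw [hBad, mem_filter] at hw
          obtain ⟨hwDc, q, hq, hnadj⟩ := hw
          refine mem_biUnion.mpr ⟨q, hq, ?_⟩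
          rw [mem_filter]
          refine ⟨mem_univ w, ?_, hnadj⟩
          intro hwq
          rw [Finset.mem_compl] at hwDc
          exact hwDc (hwq ▸ hQD' hq)
        calc #Bad ≤ #(Q.biUnion (fun q => Finset.univ.filter (fun w => w ≠ q ∧ ¬G.Adj q w)))
            := card_le_card hsub
          _ ≤ ∑ q ∈ Q, #(Finset.univ.filter (fun w => w ≠ q ∧ ¬G.Adj q w)) := card_biUnion_le
          _ = ∑ q ∈ Q, (n - 1 - G.degree q) := Finset.sum_congr rfl (fun q _ => nonnbr_count q)
      -- total
      have hdegsplit : ∑ v ∈ D, G.degree v = ∑ v ∈ D \ Q, G.degree v + ∑ q ∈ Q, G.degree q :=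
        (Finset.sum_sdiff hQD').symm
      have hDQ : ∑ v ∈ D \ Q, G.degree v ≤ (s - (r-2)) * (n-1) := by
        calc ∑ v ∈ D \ Q, G.degree v ≤ ∑ v ∈ D \ Q, (n-1) :=
            Finset.sum_le_sum (fun v _ => degree_le_pred v)
          _ = (s - (r-2)) * (n-1) := by
            rw [Finset.sum_const, smul_eq_mul, Finset.card_sdiff_of_subset hQD', hQcard]
      have hQsum : ∑ q ∈ Q, G.degree q + ∑ q ∈ Q, (n - 1 - G.degree q) = (r-2) * (n-1) := by
        rw [← Finset.sum_add_distrib]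
        have hterm : ∀ q ∈ Q, G.degree q + (n - 1 - G.degree q) = n-1 := by
          intro q _
          have := degree_le_pred (G := G) q
          omega
        rw [Finset.sum_congr rfl hterm, Finset.sum_const, smul_eq_mul, hQcard]
      have hmeet : #(G.edgeFinset.filter (fun e => ∃ v ∈ D, v ∈ e)) ≤ ∑ v ∈ D, G.degree v :=
        edges_meeting_le D
      have htot : #G.edgeFinset ≤ (k-1) * (n-1) := by
        have e1 : (s - (r-2)) * (n-1) + (r-2) * (n-1) = (k-1) * (n-1) := by
          rw [← Nat.add_mul]
          congr 1
          omega
        omega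
      have := arithC k n t hk hn'
      omega
    · -- Case B : no (r-2)-clique inside D ; use Turán
      push_neg at hclq
      have hq3 : 0 < r - 3 := by omega
      have hc3 : 0 < k - 1 := by omega
      have hin_le : #(G.edgeFinset.filter (fun e => ∀ v ∈ e, v ∈ D)) ≤ t := by
        rw [ht]
        apply edges_inside_le_turan hq3 hc3 (hsB ▸ hs.symm)
        intro S hS hSc
        have : r - 3 + 1 = r - 2 := by omega
        rw [this] at hSc
        exact hclq S hS hSc
      have hin_le2 : #((G.edgeFinset.filter (fun e => ∃ v ∈ D, v ∈ e)).filter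
          (fun e => ∀ v ∈ e, v ∈ D)) ≤ t := le_trans (card_le_card hinsub) hin_le
      have hXle : 2 * #(G.edgeFinset.filter (fun e => ∀ v ∈ e, v ∈ T)) ≤ n - k + 1 := by
        have : #T = n - k + 1 := by
          rw [hTcard, hM0, hsB]; omega
        omega
      omega


/-- The extremal construction: Turán graph joined with a matching. -/
def LG (a N q : ℕ) : SimpleGraph (Fin a ⊕ Fin N) where
  Adj x y :=
    match x, y with
    | .inl i, .inl j => (i : ℕ) % q ≠ (j : ℕ) % q
    | .inl _, .inr _ => True
    | .inr _, .inl _ => True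
    | .inr i, .inr j => i ≠ j ∧ (i : ℕ) / 2 = (j : ℕ) / 2
  symm := by
    constructor
    rintro (x | x) (y | y) h
    · exact fun hh => h hh.symm
    · trivial
    · trivial
    · exact ⟨h.1.symm, h.2.symm⟩
  loopless := by
    constructor
    rintro (x | x) h
    · exact h rfl
    · exact h.1 rfl

instance LG_decAdj (a N q : ℕ) : DecidableRel (LG a N q).Adj := fun x y =>
  match x, y with
  | .inl i, .inl j => inferInstanceAs (Decidable ((i:ℕ)%q ≠ (j:ℕ)%q))
  | .inl _, .inr _ => inferInstanceAs (Decidable True)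
  | .inr _, .inl _ => inferInstanceAs (Decidable True)
  | .inr i, .inr j => inferInstanceAs (Decidable (i ≠ j ∧ (i:ℕ)/2 = (j:ℕ)/2))

lemma LG_adj_rr {a N q : ℕ} {i j : Fin N} :
    (LG a N q).Adj (Sum.inr i) (Sum.inr j) ↔ i ≠ j ∧ (i : ℕ) / 2 = (j : ℕ) / 2 :=
  Iff.rfl

lemma LG_kP3_free {a N q k : ℕ} (hak : a < k) : ¬ GContains (LG a N q) (kPaths k 3) := by
  rintro ⟨f, hf⟩
  -- every path uses a left vertex
  have key : ∀ i : Fin k, ∃ c : Fin a, ∃ j : Fin 3, f (i, j) = Sum.inl c := by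
    intro i
    by_contra hcon
    push_neg at hcon
    have hright : ∀ j : Fin 3, ∃ b : Fin N, f (i, j) = Sum.inr b := by
      intro j
      rcases hsum : f (i, j) with c | b
      · exact absurd hsum (hcon c j)
      · exact ⟨b, rfl⟩
    obtain ⟨b0, hb0⟩ := hright 0
    obtain ⟨b1, hb1⟩ := hright 1
    obtain ⟨b2, hb2⟩ := hright 2
    have a10 : (LG a N q).Adj (f (i,1)) (f (i,0)) := by
      apply hf
      exact show _ ∧ _ from ⟨rfl, Or.inr (by norm_num)⟩
    have a12 : (LG a N q).Adj (f (i,1)) (f (i,2)) := by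
      apply hf
      exact show _ ∧ _ from ⟨rfl, Or.inl (by norm_num)⟩
    rw [hb1, hb0, LG_adj_rr] at a10
    rw [hb1, hb2, LG_adj_rr] at a12
    have h02 : b0 ≠ b2 := by
      intro hh
      have := f.injective (hb0.trans (hh ▸ hb2.symm))
      simp at this
    have e10 : b1 ≠ b0 := a10.1
    have e12 : b1 ≠ b2 := a12.1
    have : (b0 : ℕ) = b2 := by
      have q1 := a10.2
      have q2 := a12.2
      have n1 : (b1 : ℕ) ≠ (b0 : ℕ) := fun hh => e10 (Fin.ext hh)
      have n2 : (b1 : ℕ) ≠ (b2 : ℕ) := fun hh => e12 (Fin.ext hh)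
      omega
    exact h02 (Fin.ext this)
  choose c jj hcj using key
  have hinj : Function.Injective c := by
    intro i i' hii
    have : f (i, jj i) = f (i', jj i') := by rw [hcj i, hcj i', hii]
    have := f.injective this
    exact (Prod.ext_iff.mp this).1
  have := Fintype.card_le_of_injective c hinj
  simp only [Fintype.card_fin] at this
  omega

lemma LG_Kr_free {a N q r : ℕ} (hq : 0 < q) (hqr : q + 3 ≤ r) :
    ¬ GContains (LG a N q) (⊤ : SimpleGraph (Fin r)) := by
  rintro ⟨f, hf⟩
  classical
  have hadj : ∀ i j : Fin r, i ≠ j → (LG a N q).Adj (f i) (f j) := by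
    intro i j hij
    exact hf i j hij
  set SL : Finset (Fin r) := Finset.univ.filter (fun i => (f i).isLeft) with hSL
  have hSLcard : #SL ≤ q := by
    have hmem : ∀ i ∈ SL, ∃ c : Fin a, f i = Sum.inl c := by
      intro i hi
      rw [hSL, mem_filter] at hi
      exact Sum.isLeft_iff.mp hi.2
    choose g hg using hmem
    calc #SL ≤ #(Finset.univ : Finset (Fin q)) := by
          apply Finset.card_le_card_of_injOn
            (fun i => if h : i ∈ SL then (⟨(g i h : ℕ) % q, Nat.mod_lt _ hq⟩ : Fin q)
              else ⟨0, hq⟩)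
          · intro i _; exact mem_univ _
          · intro i hi j hj heq
            simp only [mem_coe] at hi hj
            simp only [dif_pos hi, dif_pos hj, Fin.mk.injEq] at heq
            by_contra hij
            have := hadj i j hij
            rw [hg i hi, hg j hj] at this
            exact this heq
      _ = q := by simp
  have hSRcard : #(Finset.univ.filter (fun i : Fin r => ¬ (f i).isLeft)) ≤ 2 := by
    by_contra hcon
    push_neg at hcon
    obtain ⟨x, hx, y, hy, z, hz, hxy, hxz, hyz⟩ := Finset.two_lt_card.mp hcon
    rw [mem_filter] at hx hy hz
    obtain ⟨bx, hbx⟩ := Sum.isRight_iff.mp (Sum.not_isLeft.mp hx.2)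
    obtain ⟨by', hby⟩ := Sum.isRight_iff.mp (Sum.not_isLeft.mp hy.2)
    obtain ⟨bz, hbz⟩ := Sum.isRight_iff.mp (Sum.not_isLeft.mp hz.2)
    have axy := hadj x y hxy
    have axz := hadj x z hxz
    have ayz := hadj y z hyz
    rw [hbx, hby, LG_adj_rr] at axy
    rw [hbx, hbz, LG_adj_rr] at axz
    rw [hby, hbz, LG_adj_rr] at ayz
    have n1 : (bx : ℕ) ≠ (by' : ℕ) := fun hh => axy.1 (Fin.ext hh)
    have n2 : (bx : ℕ) ≠ (bz : ℕ) := fun hh => axz.1 (Fin.ext hh)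
    have n3 : (by' : ℕ) ≠ (bz : ℕ) := fun hh => ayz.1 (Fin.ext hh)
    have q1 := axy.2
    have q2 := axz.2
    omega
  have hsum : #SL + #(Finset.univ.filter (fun i : Fin r => ¬ (f i).isLeft)) = r := by
    rw [hSL]
    rw [Finset.card_filter_add_card_filter_not]
    simp
  omega


section count
variable (a N q : ℕ)

lemma LG_card :
    #(LG a N q).edgeFinset = #(turanGraph a q).edgeFinset + a * N + N / 2 := by
  classical
  set EAA : Finset (Sym2 (Fin a ⊕ Fin N)) :=
    (turanGraph a q).edgeFinset.image (Sym2.map (Sum.inl : Fin a → Fin a ⊕ Fin N)) with hEAA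
  set EAB : Finset (Sym2 (Fin a ⊕ Fin N)) :=
    (Finset.univ : Finset (Fin a × Fin N)).image
      (fun p => s(Sum.inl p.1, Sum.inr p.2)) with hEAB
  set EBB : Finset (Sym2 (Fin a ⊕ Fin N)) :=
    (Finset.univ : Finset (Fin (N/2))).image
      (fun j => s(Sum.inr (⟨2*j.1, by have := j.isLt; omega⟩ : Fin N),
                  Sum.inr (⟨2*j.1+1, by have := j.isLt; omega⟩ : Fin N))) with hEBB
  have hunion : (LG a N q).edgeFinset = (EAA ∪ EAB) ∪ EBB := by
    ext e
    induction e using Sym2.ind with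
    | _ x y =>
      rw [mem_edgeFinset, mem_edgeSet, mem_union, mem_union]
      constructor
      · intro hadj
        match x, y with
        | Sum.inl i, Sum.inl j =>
          refine Or.inl (Or.inl ?_)
          rw [hEAA, mem_image]
          exact ⟨s(i,j), by rwa [mem_edgeFinset, mem_edgeSet], by rw [Sym2.map_pair_eq]⟩
        | Sum.inl i, Sum.inr j =>
          refine Or.inl (Or.inr ?_)
          rw [hEAB, mem_image]
          exact ⟨(i, j), mem_univ _, rfl⟩
        | Sum.inr i, Sum.inl j =>
          refine Or.inl (Or.inr ?_)
          rw [hEAB, mem_image]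
          exact ⟨(j, i), mem_univ _, Sym2.eq_swap⟩
        | Sum.inr i, Sum.inr j =>
          refine Or.inr ?_
          rw [hEBB, mem_image]
          obtain ⟨hne, hdiv⟩ := hadj
          have hne' : (i : ℕ) ≠ (j : ℕ) := fun hh => hne (Fin.ext hh)
          have hiN := i.isLt
          have hjN := j.isLt
          refine ⟨⟨(i:ℕ)/2, by omega⟩, mem_univ _, ?_⟩
          have hij : ((i:ℕ) = 2*((i:ℕ)/2) ∧ (j:ℕ) = 2*((i:ℕ)/2)+1) ∨
              ((j:ℕ) = 2*((i:ℕ)/2) ∧ (i:ℕ) = 2*((i:ℕ)/2)+1) := by omega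
          rcases hij with ⟨h1, h2⟩ | ⟨h1, h2⟩
          · refine Sym2.eq_iff.mpr (Or.inl ⟨congrArg Sum.inr (Fin.ext ?_), congrArg Sum.inr (Fin.ext ?_)⟩) <;>
              (simp only [Fin.val_mk]; omega)
          · rw [Sym2.eq_swap]
            refine Sym2.eq_iff.mpr (Or.inl ⟨congrArg Sum.inr (Fin.ext ?_), congrArg Sum.inr (Fin.ext ?_)⟩) <;>
              (simp only [Fin.val_mk]; omega)
      · intro hmem
        rcases hmem with (hmem | hmem) | hmem
        · rw [hEAA, mem_image] at hmem
          obtain ⟨e', he', heq⟩ := hmem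
          revert he' heq
          induction e' using Sym2.ind with
          | _ u v =>
            intro he' heq
            rw [Sym2.map_pair_eq, Sym2.eq_iff] at heq
            have hadj' : (turanGraph a q).Adj u v := by
              rwa [mem_edgeFinset, mem_edgeSet] at he'
            rcases heq with ⟨h1, h2⟩ | ⟨h1, h2⟩
            · rw [← h1, ← h2]; exact hadj'
            · rw [← h1, ← h2]; exact hadj'.symm
        · rw [hEAB, mem_image] at hmem
          obtain ⟨p, -, heq⟩ := hmem
          rw [Sym2.eq_iff] at heq
          rcases heq with ⟨h1, h2⟩ | ⟨h1, h2⟩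
          · rw [← h1, ← h2]; trivial
          · rw [← h1, ← h2]; trivial
        · rw [hEBB, mem_image] at hmem
          obtain ⟨j, -, heq⟩ := hmem
          rw [Sym2.eq_iff] at heq
          have hj := j.isLt
          rcases heq with ⟨h1, h2⟩ | ⟨h1, h2⟩ <;> rw [← h1, ← h2] <;>
            exact ⟨Fin.ne_of_val_ne (by simp only [Fin.val_mk]; omega),
              by simp only [Fin.val_mk]; omega⟩
  have hd1 : Disjoint EAA EAB := by
    rw [Finset.disjoint_left]
    intro e he1 he2
    rw [hEAA, mem_image] at he1
    rw [hEAB, mem_image] at he2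
    obtain ⟨e', -, heq1⟩ := he1
    obtain ⟨p, -, heq2⟩ := he2
    rw [← heq2] at heq1
    revert heq1
    induction e' using Sym2.ind with
    | _ u v =>
      intro heq1
      rw [Sym2.map_pair_eq, Sym2.eq_iff] at heq1
      rcases heq1 with ⟨-, h2⟩ | ⟨h1, -⟩
      · exact Sum.inl_ne_inr h2
      · exact Sum.inl_ne_inr h1
  have hd2 : Disjoint (EAA ∪ EAB) EBB := by
    rw [Finset.disjoint_left]
    intro e he1 he2
    rw [hEBB, mem_image] at he2
    obtain ⟨j, -, heq2⟩ := he2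
    rw [← heq2] at he1
    rcases Finset.mem_union.mp he1 with he1 | he1
    · rw [hEAA, mem_image] at he1
      obtain ⟨e', -, heq1⟩ := he1
      revert heq1
      induction e' using Sym2.ind with
      | _ u v =>
        intro heq1
        rw [Sym2.map_pair_eq, Sym2.eq_iff] at heq1
        rcases heq1 with ⟨h1, -⟩ | ⟨h1, -⟩ <;> exact Sum.inl_ne_inr h1
    · rw [hEAB, mem_image] at he1
      obtain ⟨p, -, heq1⟩ := he1
      rw [Sym2.eq_iff] at heq1
      rcases heq1 with ⟨h1, -⟩ | ⟨h1, -⟩ <;> exact Sum.inl_ne_inr h1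
  have hcAA : #EAA = #(turanGraph a q).edgeFinset := by
    rw [hEAA]
    exact Finset.card_image_of_injective _ (Sym2.map.injective Sum.inl_injective)
  have hcAB : #EAB = a * N := by
    rw [hEAB, Finset.card_image_of_injective, Finset.card_univ, Fintype.card_prod]
    · simp
    · rintro ⟨x1, y1⟩ ⟨x2, y2⟩ heq
      rw [Sym2.eq_iff] at heq
      rcases heq with ⟨h1, h2⟩ | ⟨h1, h2⟩
      · exact Prod.ext (Sum.inl_injective h1) (Sum.inr_injective h2)
      · exact absurd h1 Sum.inl_ne_inr
  have hcBB : #EBB = N / 2 := by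
    rw [hEBB, Finset.card_image_of_injective, Finset.card_univ, Fintype.card_fin]
    rintro j1 j2 heq
    rw [Sym2.eq_iff] at heq
    rcases heq with ⟨h1, -⟩ | ⟨h1, h2⟩
    · have := Sum.inr_injective h1
      rw [Fin.mk.injEq] at this
      exact Fin.ext (by omega)
    · have e1 := Sum.inr_injective h1
      have e2 := Sum.inr_injective h2
      rw [Fin.mk.injEq] at e1 e2
      omega
  rw [hunion, Finset.card_union_of_disjoint hd2, Finset.card_union_of_disjoint hd1,
    hcAA, hcAB, hcBB]
end count


lemma eCount_eq_card {V : Type*} [Fintype V] (G : SimpleGraph V) [DecidableRel G.Adj] :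
    eCount G = #G.edgeFinset := by
  rw [eCount, SimpleGraph.edgeFinset, Set.ncard_eq_toFinset_card']

lemma GContains_of_map {V W X : Type*} (e : V ≃ W) (G : SimpleGraph V)
    (H : SimpleGraph X) (h : GContains (G.map e.toEmbedding) H) : GContains G H := by
  obtain ⟨f, hf⟩ := h
  refine ⟨f.trans e.symm.toEmbedding, ?_⟩
  intro x y hxy
  have := hf x y hxy
  rw [SimpleGraph.map_adj] at this
  obtain ⟨u, v, huv, hu, hv⟩ := this
  have hu' : e.symm (f x) = u := by rw [← hu]; exact e.symm_apply_apply u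
  have hv' : e.symm (f y) = v := by rw [← hv]; exact e.symm_apply_apply v
  simpa [Function.Embedding.trans, hu', hv'] using huv


/-- Corollary: Turán number of `kP₃` and `K_r` for `r ≥ 4`. -/
theorem ex_kP3_and_Kr (k r n : ℕ) (hk : 2 ≤ k) (hr : 4 ≤ r)
    (hn : 9 * (k ^ 2 + k + 1) + 2 * r ≤ n) :
    exNum n (fun G => ¬ GContains G (kPaths k 3) ∧
        ¬ GContains G (⊤ : SimpleGraph (Fin r))) =
      (k - 1) * (n - k + 1) + (n - k + 1) / 2 + eCount (turanGraph (k - 1) (r - 3)) := by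
  classical
  have hkn : k ≤ n := by nlinarith [sq_nonneg k, (sq k).symm ▸ Nat.mul_le_mul_right k hk]
  have hadd : (k - 1) + (n - k + 1) = n := by omega
  set eqv : (Fin (k-1) ⊕ Fin (n-k+1)) ≃ Fin n :=
    (finSumFinEquiv).trans (finCongr hadd) with heqv
  set G0 : SimpleGraph (Fin n) := (LG (k-1) (n-k+1) (r-3)).map eqv.toEmbedding with hG0
  have hiso : (LG (k-1) (n-k+1) (r-3)) ≃g G0 := SimpleGraph.Iso.map eqv _
  have hfree1 : ¬ GContains G0 (kPaths k 3) := by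
    intro h
    exact LG_kP3_free (by omega : k - 1 < k) (GContains_of_map eqv _ _ h)
  have hfree2 : ¬ GContains G0 (⊤ : SimpleGraph (Fin r)) := by
    intro h
    exact LG_Kr_free (by omega : 0 < r - 3) (by omega : (r-3) + 3 ≤ r)
      (GContains_of_map eqv _ _ h)
  have htur : eCount (turanGraph (k - 1) (r - 3)) = #(turanGraph (k-1) (r-3)).edgeFinset :=
    eCount_eq_card _
  have hcount : eCount G0 = (k - 1) * (n - k + 1) + (n - k + 1) / 2 +
      eCount (turanGraph (k - 1) (r - 3)) := by
    rw [eCount_eq_card, ← hiso.card_edgeFinset_eq, LG_card, htur]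
    omega
  apply le_antisymm
  · apply csSup_le
    · exact ⟨eCount G0, G0, ⟨hfree1, hfree2⟩, rfl⟩
    · rintro m ⟨G, ⟨hf1, hf2⟩, rfl⟩
      letI : DecidableRel G.Adj := Classical.decRel _
      rw [eCount_eq_card, htur]
      exact upper_bound hk hr hn G hf1 hf2
  · apply le_csSup
    · refine ⟨(k - 1) * (n - k + 1) + (n - k + 1) / 2 + eCount (turanGraph (k - 1) (r - 3)),
        ?_⟩
      rintro m ⟨G, ⟨hf1, hf2⟩, rfl⟩
      letI : DecidableRel G.Adj := Classical.decRel _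
      rw [eCount_eq_card, htur]
      exact upper_bound hk hr hn G hf1 hf2
    · exact ⟨G0, ⟨hfree1, hfree2⟩, hcount⟩
end

section
/- Let k ≥ 2, ℓ ≥ 4, r ≥ 3 be integers and n ≥ 4k²ℓ²(kℓ+r)(⌊ℓ/2⌋+1)·C(ℓ,⌊ℓ/2⌋). Let G be a kP_ℓ-free graph on n vertices with e(G) ≥ (k⌊ℓ/2⌋ − 1)(n − k⌊ℓ/2⌋ + 1), and set n_k = (n/3 − C(ℓ,2))/((⌈ℓ/2⌉+1)·C(ℓ,⌊ℓ/2⌋)) + kℓ. Let A be the set of all vertices of G that belong to some set S ⊆ V(G) with |S| = ⌊ℓ/2⌋ whose common neighborhood outside S has size at least n_k. Then for every X ⊆ A with |X| < ⌊ℓ/2⌋, there exist k−1 pairwise disjoint sets S₁,…,S_{k−1} ⊆ A∖X, each of size ⌊ℓ/2⌋ and each with common neighborhood outside itself of size at least n_k. -/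
open SimpleGraph

section Aux

open Finset

variable {n : ℕ}

noncomputable local instance (G : SimpleGraph (Fin n)) : DecidableRel G.Adj :=
  fun _ _ => Classical.propDecidable _

/-- Delete a set of vertices (isolate them). -/
def del (G : SimpleGraph (Fin n)) (A : Finset (Fin n)) : SimpleGraph (Fin n) where
  Adj x y := G.Adj x y ∧ x ∉ A ∧ y ∉ A
  symm := ⟨fun _ _ ⟨h, hx, hy⟩ => ⟨h.symm, hy, hx⟩⟩
  loopless := ⟨fun x ⟨h, _, _⟩ => G.ne_of_adj h rfl⟩

lemma del_le (G : SimpleGraph (Fin n)) (A : Finset (Fin n)) : del G A ≤ G :=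
  fun _ _ h => h.1

lemma del_del (G : SimpleGraph (Fin n)) (A B : Finset (Fin n)) :
    del (del G A) B = del G (A ∪ B) := by
  ext x y
  simp only [del, mem_union]
  tauto

lemma del_adj {G : SimpleGraph (Fin n)} {A : Finset (Fin n)} {x y : Fin n} :
    (del G A).Adj x y ↔ G.Adj x y ∧ x ∉ A ∧ y ∉ A := Iff.rfl

/-- Twice the number of edges, as a degree sum. -/
noncomputable def DS (G : SimpleGraph (Fin n)) : ℕ := ∑ v, G.degree v

lemma DS_eq_twice_eCount (G : SimpleGraph (Fin n)) : DS G = 2 * eCount G := by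
  rw [DS, SimpleGraph.sum_degrees_eq_twice_card_edges]
  congr 1
  rw [eCount, SimpleGraph.edgeFinset, Set.ncard_eq_toFinset_card']

lemma nbf_inter_eq_filter (G : SimpleGraph (Fin n)) (A : Finset (Fin n)) (v : Fin n) :
    G.neighborFinset v ∩ A = A.filter (fun u => G.Adj v u) := by
  ext u; simp [SimpleGraph.mem_neighborFinset, and_comm]

lemma nbf_sdiff_eq_filter (G : SimpleGraph (Fin n)) (A : Finset (Fin n)) (v : Fin n) :
    G.neighborFinset v \ A = Aᶜ.filter (fun u => G.Adj v u) := by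
  ext u; simp [SimpleGraph.mem_neighborFinset, and_comm]

lemma deg_split (G : SimpleGraph (Fin n)) (A : Finset (Fin n)) (v : Fin n) :
    G.degree v = (G.neighborFinset v ∩ A).card + (G.neighborFinset v \ A).card := by
  rw [SimpleGraph.degree, ← Finset.card_inter_add_card_sdiff (G.neighborFinset v) A]

/-- cross-count symmetry -/
lemma cross_symm (G : SimpleGraph (Fin n)) (A : Finset (Fin n)) :
    ∑ v ∈ Aᶜ, (G.neighborFinset v ∩ A).card = ∑ u ∈ A, (G.neighborFinset u \ A).card := by
  have h1 : ∀ v, (G.neighborFinset v ∩ A).card = ∑ u ∈ A, (if G.Adj v u then 1 else 0) := by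
    intro v
    rw [nbf_inter_eq_filter, ← Finset.sum_filter]
    simp
  have h2 : ∀ u, (G.neighborFinset u \ A).card = ∑ v ∈ Aᶜ, (if G.Adj u v then 1 else 0) := by
    intro u
    rw [nbf_sdiff_eq_filter, ← Finset.sum_filter]
    simp
  simp only [h1, h2]
  rw [Finset.sum_comm]
  apply Finset.sum_congr rfl
  intro u _
  apply Finset.sum_congr rfl
  intro v _
  congr 1
  simp [SimpleGraph.adj_comm]

lemma del_nbf_notmem (G : SimpleGraph (Fin n)) (A : Finset (Fin n)) {v : Fin n} (hv : v ∉ A) :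
    (del G A).neighborFinset v = G.neighborFinset v \ A := by
  ext u
  simp only [SimpleGraph.mem_neighborFinset, del_adj, Finset.mem_sdiff]
  tauto

lemma del_deg_mem (G : SimpleGraph (Fin n)) (A : Finset (Fin n)) {v : Fin n} (hv : v ∈ A) :
    (del G A).degree v = 0 := by
  rw [SimpleGraph.degree, Finset.card_eq_zero]
  ext u
  simp [SimpleGraph.mem_neighborFinset, del_adj, hv]

/-- The main degree-sum splitting identity:
`DS G = (edges inside A counted twice) + 2*cross + DS (del G A)`. -/
lemma DS_split (G : SimpleGraph (Fin n)) (A : Finset (Fin n)) :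
    DS G = (∑ u ∈ A, (G.neighborFinset u ∩ A).card)
      + 2 * (∑ v ∈ Aᶜ, (G.neighborFinset v ∩ A).card) + DS (del G A) := by
  have hDSdel : DS (del G A) = ∑ v ∈ Aᶜ, (G.neighborFinset v \ A).card := by
    rw [DS, ← Finset.sum_compl_add_sum A]
    have h0 : ∑ u ∈ A, (del G A).degree u = 0 :=
      Finset.sum_eq_zero (fun u hu => del_deg_mem G A hu)
    rw [h0, add_zero]
    apply Finset.sum_congr rfl
    intro v hv
    rw [SimpleGraph.degree, del_nbf_notmem G A (Finset.mem_compl.mp hv)]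
  have hsplit : DS G = (∑ u ∈ A, G.degree u) + ∑ v ∈ Aᶜ, G.degree v := by
    rw [DS, ← Finset.sum_compl_add_sum A, add_comm]
  rw [hsplit, hDSdel]
  have hA : ∑ u ∈ A, G.degree u
      = (∑ u ∈ A, (G.neighborFinset u ∩ A).card) + ∑ u ∈ A, (G.neighborFinset u \ A).card := by
    rw [← Finset.sum_add_distrib]
    exact Finset.sum_congr rfl (fun u _ => deg_split G A u)
  have hAc : ∑ v ∈ Aᶜ, G.degree v
      = (∑ v ∈ Aᶜ, (G.neighborFinset v ∩ A).card) + ∑ v ∈ Aᶜ, (G.neighborFinset v \ A).card := by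
    rw [← Finset.sum_add_distrib]
    exact Finset.sum_congr rfl (fun v _ => deg_split G A v)
  rw [hA, hAc, ← cross_symm]
  ring

lemma DS_del_le (G : SimpleGraph (Fin n)) (A : Finset (Fin n)) : DS (del G A) ≤ DS G := by
  rw [DS_split G A]; omega

lemma DS_le_del_add (G : SimpleGraph (Fin n)) (A : Finset (Fin n)) :
    DS G ≤ DS (del G A) + 2 * ∑ u ∈ A, G.degree u := by
  have h := DS_split G A
  have h1 : ∑ u ∈ A, (G.neighborFinset u ∩ A).card ≤ ∑ u ∈ A, G.degree u :=
    Finset.sum_le_sum (fun u _ => by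
      rw [SimpleGraph.degree]; exact Finset.card_le_card Finset.inter_subset_left)
  have h2 : ∑ u ∈ A, G.degree u
      = (∑ u ∈ A, (G.neighborFinset u ∩ A).card) + ∑ u ∈ A, (G.neighborFinset u \ A).card := by
    rw [← Finset.sum_add_distrib]
    exact Finset.sum_congr rfl (fun u _ => deg_split G A u)
  have h3 := cross_symm G A
  omega

/-! ### Function paths and the Erdős–Gallai bound -/

/-- A path on `m` vertices given by a vertex function. -/
def IsFP (G : SimpleGraph (Fin n)) (m : ℕ) (f : ℕ → Fin n) : Prop :=
  (∀ i j, i < m → j < m → f i = f j → i = j) ∧ (∀ i, i + 1 < m → G.Adj (f i) (f (i + 1)))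

def HasPath (G : SimpleGraph (Fin n)) (m : ℕ) : Prop := ∃ f, IsFP G m f

lemma IsFP.mono {G G' : SimpleGraph (Fin n)} (h : G ≤ G') {m f} (hf : IsFP G m f) :
    IsFP G' m f := ⟨hf.1, fun i hi => h (hf.2 i hi)⟩

lemma HasPath.mono {G G' : SimpleGraph (Fin n)} (h : G ≤ G') {m} :
    HasPath G m → HasPath G' m := fun ⟨f, hf⟩ => ⟨f, hf.mono h⟩

lemma IsFP.trunc {G : SimpleGraph (Fin n)} {m f} (hf : IsFP G m f) {m'} (h : m' ≤ m) :
    IsFP G m' f := ⟨fun i j hi hj => hf.1 i j (by omega) (by omega),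
      fun i hi => hf.2 i (by omega)⟩

lemma HasPath.trunc {G : SimpleGraph (Fin n)} {m} (h : HasPath G m) {m'} (hm : m' ≤ m) :
    HasPath G m' := h.elim fun f hf => ⟨f, hf.trunc hm⟩

lemma IsFP.card_le {G : SimpleGraph (Fin n)} {m f} (hf : IsFP G m f) : m ≤ n := by
  have h1 : ((Finset.range m).image f).card = m := by
    rw [Finset.card_image_of_injOn, Finset.card_range]
    intro i hi j hj hij
    exact hf.1 i j (Finset.mem_range.mp hi) (Finset.mem_range.mp hj) hij
  calc m = ((Finset.range m).image f).card := h1.symm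
    _ ≤ (Finset.univ : Finset (Fin n)).card := Finset.card_le_univ _
    _ = n := by simp

lemma HasPath.card_le {G : SimpleGraph (Fin n)} {m} (h : HasPath G m) : m ≤ n :=
  h.elim fun _ hf => hf.card_le

/-- Support of a graph: the vertices of positive degree. -/
noncomputable def supp (G : SimpleGraph (Fin n)) : Finset (Fin n) :=
  Finset.univ.filter (fun v => 0 < G.degree v)

lemma mem_supp {G : SimpleGraph (Fin n)} {v : Fin n} : v ∈ supp G ↔ 0 < G.degree v := by
  simp [supp]

lemma mem_supp_of_adj {G : SimpleGraph (Fin n)} {v w : Fin n} (h : G.Adj v w) : v ∈ supp G := by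
  rw [mem_supp, SimpleGraph.degree, Finset.card_pos]
  exact ⟨w, (SimpleGraph.mem_neighborFinset G v w).mpr h⟩

lemma DS_eq_sum_supp (G : SimpleGraph (Fin n)) : DS G = ∑ v ∈ supp G, G.degree v := by
  rw [DS]
  symm
  apply Finset.sum_subset (Finset.subset_univ _)
  intro x _ hx
  rw [mem_supp] at hx
  omega

lemma supp_del_subset (G : SimpleGraph (Fin n)) (A : Finset (Fin n)) :
    supp (del G A) ⊆ supp G \ A := by
  intro v hv
  rw [mem_supp, SimpleGraph.degree, Finset.card_pos] at hv
  obtain ⟨w, hw⟩ := hv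
  rw [SimpleGraph.mem_neighborFinset, del_adj] at hw
  rw [Finset.mem_sdiff]
  exact ⟨mem_supp_of_adj hw.1, hw.2.1⟩

lemma exists_maxpath (G : SimpleGraph (Fin n)) (hne : (supp G).Nonempty) :
    ∃ m f, 2 ≤ m ∧ IsFP G m f ∧ ∀ m', HasPath G m' → m' ≤ m := by
  classical
  obtain ⟨v, hv⟩ := hne
  rw [mem_supp, SimpleGraph.degree, Finset.card_pos] at hv
  obtain ⟨u, hu⟩ := hv
  have hadj : G.Adj v u := (SimpleGraph.mem_neighborFinset G v u).mp hu
  have hP2 : HasPath G 2 := by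
    refine ⟨fun i => if i = 0 then v else u, ?_, ?_⟩
    · intro i j hi hj hij
      have hvu : v ≠ u := G.ne_of_adj hadj
      simp only [] at hij
      by_cases h1 : i = 0 <;> by_cases h2 : j = 0
      · omega
      · rw [if_pos h1, if_neg h2] at hij; exact absurd hij hvu
      · rw [if_neg h1, if_pos h2] at hij; exact absurd hij.symm hvu
      · omega
    · intro i hi
      have h0 : i = 0 := by omega
      subst h0
      simpa using hadj
  have h2n : 2 ≤ n := hP2.card_le
  haveI : DecidablePred (HasPath G) := fun _ => Classical.propDecidable _
  set m := Nat.findGreatest (HasPath G) n with hm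
  have hm2 : 2 ≤ m := Nat.le_findGreatest h2n hP2
  have hmP : HasPath G m := Nat.findGreatest_spec h2n hP2
  obtain ⟨f, hf⟩ := hmP
  refine ⟨m, f, hm2, hf, ?_⟩
  intro m' hm'
  by_contra h
  exact Nat.findGreatest_is_greatest (by omega) hm'.card_le hm'

/-- Core rotation lemma: in a graph where all supported degrees are `> (ℓ-2)/2` and with
no path on `ℓ` vertices, there is a nonempty closed vertex set of size `≤ ℓ - 1`. -/
lemma cycle_closure (G : SimpleGraph (Fin n)) (ℓ : ℕ) (hl : 4 ≤ ℓ)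
    (hfree : ¬ HasPath G ℓ) (hne : (supp G).Nonempty)
    (hdegs : ∀ v ∈ supp G, ℓ - 2 < 2 * G.degree v) :
    ∃ W : Finset (Fin n), W.Nonempty ∧ W ⊆ supp G ∧ W.card ≤ ℓ - 1 ∧
      (∀ v ∈ W, G.neighborFinset v ⊆ W) := by
  classical
  obtain ⟨m, f, hm2, hf, hmax⟩ := exists_maxpath G hne
  have hmlt : m ≤ ℓ - 1 := by
    by_contra h
    exact hfree (HasPath.trunc ⟨f, hf⟩ (by omega))
  -- maximality: no extension at the start of any maximal-length path
  have EXTgen : ∀ g : ℕ → Fin n, IsFP G m g → ∀ w, G.Adj (g 0) w → ∃ j, j < m ∧ g j = w := by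
    intro g hg w hadj
    by_contra hc
    push_neg at hc
    have hnew : HasPath G (m + 1) := by
      refine ⟨fun t => if t = 0 then w else g (t - 1), ?_, ?_⟩
      · intro i j hi hj hij
        by_cases hi0 : i = 0 <;> by_cases hj0 : j = 0 <;> simp [hi0, hj0] at hij ⊢
        · exact absurd hij.symm (hc (j-1) (by omega))
        · exact absurd hij (hc (i-1) (by omega))
        · have := hg.1 (i-1) (j-1) (by omega) (by omega) hij; omega
      · intro i hi
        by_cases hi0 : i = 0
        · subst hi0; simpa using hadj.symm
        · simp only [if_neg hi0, if_neg (by omega : ¬ i + 1 = 0)]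
          have h1 : i - 1 + 1 = i := by omega
          have h2 : i + 1 - 1 = i := by omega
          rw [h2, ← h1]
          exact hg.2 (i-1) (by omega)
    have := hmax _ hnew
    omega
  have hrev : IsFP G m (fun i => f (m - 1 - i)) := by
    constructor
    · intro i j hi hj hij
      have := hf.1 (m-1-i) (m-1-j) (by omega) (by omega) hij
      omega
    · intro i hi
      have e1 : m - 1 - (i+1) = m - 2 - i := by omega
      have e2 : m - 1 - i = m - 2 - i + 1 := by omega
      simp only [e1, e2]
      exact (hf.2 (m-2-i) (by omega)).symm
  -- the two endpoints have all neighbours on the path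
  have EXT0 : ∀ w, G.Adj (f 0) w → ∃ j, j < m ∧ f j = w := EXTgen f hf
  have EXT1 : ∀ w, G.Adj (f (m-1)) w → ∃ j, j < m ∧ f j = w := by
    intro w hw
    obtain ⟨j, hj, hje⟩ := EXTgen _ hrev w (by simpa using hw)
    exact ⟨m-1-j, by omega, hje⟩
  -- index sets
  set A := (Finset.range (m-1)).filter (fun i => G.Adj (f 0) (f (i+1))) with hA
  set B := (Finset.range (m-1)).filter (fun i => G.Adj (f (m-1)) (f i)) with hB
  have hAcard : G.degree (f 0) ≤ A.card := by
    have hex : ∀ w : Fin n, ∃ j, w ∈ G.neighborFinset (f 0) → (j < m ∧ f j = w ∧ j ≠ 0) := by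
      intro w
      by_cases hw : w ∈ G.neighborFinset (f 0)
      · have hadj : G.Adj (f 0) w := (SimpleGraph.mem_neighborFinset G _ w).mp hw
        obtain ⟨j, hj, hje⟩ := EXT0 w hadj
        refine ⟨j, fun _ => ⟨hj, hje, ?_⟩⟩
        rintro rfl
        exact G.ne_of_adj hadj (hje ▸ rfl)
      · exact ⟨0, fun h => absurd h hw⟩
    choose ι hι using hex
    apply Finset.card_le_card_of_injOn (fun w => ι w - 1)
    · intro w hw
      obtain ⟨h1, h2, h3⟩ := hι w hw
      rw [hA, Finset.mem_coe, Finset.mem_filter, Finset.mem_range]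
      beta_reduce
      constructor
      · omega
      · have : ι w - 1 + 1 = ι w := by omega
        rw [this, h2]
        exact (SimpleGraph.mem_neighborFinset G _ w).mp hw
    · intro w hw w' hw' hww
      obtain ⟨h1, h2, h3⟩ := hι w (by simpa using hw)
      obtain ⟨h1', h2', h3'⟩ := hι w' (by simpa using hw')
      have hww2 : ι w - 1 = ι w' - 1 := hww
      have : ι w = ι w' := by omega
      rw [← h2, ← h2', this]
  have hBcard : G.degree (f (m-1)) ≤ B.card := by
    have hex : ∀ w : Fin n, ∃ j, w ∈ G.neighborFinset (f (m-1)) → (j < m ∧ f j = w ∧ j ≠ m-1) := by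
      intro w
      by_cases hw : w ∈ G.neighborFinset (f (m-1))
      · have hadj : G.Adj (f (m-1)) w := (SimpleGraph.mem_neighborFinset G _ w).mp hw
        obtain ⟨j, hj, hje⟩ := EXT1 w hadj
        refine ⟨j, fun _ => ⟨hj, hje, ?_⟩⟩
        rintro rfl
        exact G.ne_of_adj hadj (hje ▸ rfl)
      · exact ⟨0, fun h => absurd h hw⟩
    choose ι hι using hex
    apply Finset.card_le_card_of_injOn (fun w => ι w)
    · intro w hw
      obtain ⟨h1, h2, h3⟩ := hι w hw
      rw [hB, Finset.mem_coe, Finset.mem_filter, Finset.mem_range]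
      beta_reduce
      refine ⟨by omega, ?_⟩
      rw [h2]
      exact (SimpleGraph.mem_neighborFinset G _ w).mp hw
    · intro w hw w' hw' hww
      obtain ⟨h1, h2, h3⟩ := hι w (by simpa using hw)
      obtain ⟨h1', h2', h3'⟩ := hι w' (by simpa using hw')
      have hww2 : ι w = ι w' := hww
      rw [← h2, ← h2', hww2]
  -- the crossing index
  have hABmem : (A ∩ B).Nonempty := by
    rw [← Finset.card_pos]
    have h1 : (A ∪ B).card + (A ∩ B).card = A.card + B.card :=
      Finset.card_union_add_card_inter A B
    have h2 : (A ∪ B).card ≤ m - 1 := by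
      have hsub : A ∪ B ⊆ Finset.range (m-1) := by
        intro i hi
        rcases Finset.mem_union.mp hi with h | h
        · exact Finset.mem_of_mem_filter i h
        · exact Finset.mem_of_mem_filter i h
      calc (A ∪ B).card ≤ (Finset.range (m-1)).card := Finset.card_le_card hsub
        _ = m - 1 := Finset.card_range _
    have hd0 : ℓ - 2 < 2 * G.degree (f 0) :=
      hdegs _ (mem_supp_of_adj (hf.2 0 (by omega)))
    have hd1 : ℓ - 2 < 2 * G.degree (f (m-1)) := by
      apply hdegs
      have e2 : m - 2 + 1 = m - 1 := by omega
      have := (hf.2 (m-2) (by omega)).symm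
      rw [e2] at this
      exact mem_supp_of_adj this
    have hcr : m - 1 < Finset.card (Finset.range (m-1)) + 1 := by
      rw [Finset.card_range]; omega
    omega
  obtain ⟨istar, histar⟩ := hABmem
  have hiA : G.Adj (f 0) (f (istar + 1)) := by
    have := Finset.mem_of_mem_inter_left histar
    rw [hA, Finset.mem_filter] at this
    exact this.2
  have hiB : G.Adj (f (m-1)) (f istar) := by
    have := Finset.mem_of_mem_inter_right histar
    rw [hB, Finset.mem_filter] at this
    exact this.2
  have histm : istar < m - 1 := by
    have := Finset.mem_of_mem_inter_left histar
    rw [hA, Finset.mem_filter, Finset.mem_range] at this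
    exact this.1
  -- the cycle function
  set ψ : ℕ → Fin n := fun t => if t ≤ istar then f t else f (m - 1 - (t - istar - 1)) with hψ
  have hψa : ∀ t, t ≤ istar → ψ t = f t := by
    intro t ht; simp only [hψ]; rw [if_pos ht]
  have hψb : ∀ t, ¬ t ≤ istar → ψ t = f (m - 1 - (t - istar - 1)) := by
    intro t ht; simp only [hψ]; rw [if_neg ht]
  have hψf : ∀ t, t < m → ∃ j, j < m ∧ ψ t = f j := by
    intro t ht
    by_cases h : t ≤ istar
    · exact ⟨t, ht, hψa t h⟩
    · exact ⟨m - 1 - (t - istar - 1), by omega, hψb t h⟩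
  have hψinj : ∀ t t', t < m → t' < m → ψ t = ψ t' → t = t' := by
    intro t t' ht ht' he
    by_cases h1 : t ≤ istar <;> by_cases h2 : t' ≤ istar
    · rw [hψa t h1, hψa t' h2] at he
      exact hf.1 t t' (by omega) (by omega) he
    · rw [hψa t h1, hψb t' h2] at he
      have := hf.1 t (m - 1 - (t' - istar - 1)) (by omega) (by omega) he; omega
    · rw [hψb t h1, hψa t' h2] at he
      have := hf.1 (m - 1 - (t - istar - 1)) t' (by omega) (by omega) he; omega
    · rw [hψb t h1, hψb t' h2] at he
      have := hf.1 (m - 1 - (t - istar - 1)) (m - 1 - (t' - istar - 1)) (by omega) (by omega) he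
      omega
  have hψadj : ∀ t, t < m → G.Adj (ψ t) (ψ ((t + 1) % m)) := by
    intro t ht
    by_cases hlast : t = m - 1
    · have hmod : (t + 1) % m = 0 := by
        rw [hlast, (by omega : m - 1 + 1 = m), Nat.mod_self]
      rw [hmod, hψa 0 (by omega), hψb t (by omega), hlast,
        (by omega : m - 1 - (m - 1 - istar - 1) = istar + 1)]
      exact hiA.symm
    · have hmod : (t + 1) % m = t + 1 := Nat.mod_eq_of_lt (by omega)
      rw [hmod]
      by_cases h1 : t + 1 ≤ istar
      · rw [hψa t (by omega), hψa (t+1) h1]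
        exact hf.2 t (by omega)
      · by_cases h2 : t ≤ istar
        · have ht' : t = istar := by omega
          rw [hψa t h2, hψb (t+1) h1, ht',
            (by omega : m - 1 - (istar + 1 - istar - 1) = m - 1)]
          exact hiB.symm
        · rw [hψb t h2, hψb (t+1) h1,
            (by omega : m - 1 - (t - istar - 1) = (m - 1 - (t + 1 - istar - 1)) + 1)]
          exact (hf.2 (m - 1 - (t + 1 - istar - 1)) (by omega)).symm
  have hψsurj : ∀ j, j < m → ∃ a, a < m ∧ ψ a = f j := by
    intro j hj
    by_cases h : j ≤ istar
    · exact ⟨j, hj, hψa j h⟩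
    · refine ⟨istar + 1 + (m - 1 - j), by omega, ?_⟩
      rw [hψb _ (by omega)]
      congr 1
      omega
  -- closure: no edges leave the path
  have hclosure : ∀ y, (∀ j, j < m → f j ≠ y) → ∀ j, j < m → ¬ G.Adj (f j) y := by
    intro y hy j hj hadj
    obtain ⟨a, ha, hae⟩ := hψsurj j hj
    have hnew : HasPath G (m + 1) := by
      refine ⟨fun t => if t = 0 then y else ψ ((a + (t - 1)) % m), ?_, ?_⟩
      · intro i j' hi hj' hij
        simp only [] at hij
        by_cases hi0 : i = 0 <;> by_cases hj0 : j' = 0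
        · omega
        · rw [if_pos hi0, if_neg hj0] at hij
          obtain ⟨jj, hjj, hjje⟩ := hψf ((a + (j' - 1)) % m) (Nat.mod_lt _ (by omega))
          exact absurd (hjje.symm.trans hij.symm) (hy jj hjj)
        · rw [if_neg hi0, if_pos hj0] at hij
          obtain ⟨jj, hjj, hjje⟩ := hψf ((a + (i - 1)) % m) (Nat.mod_lt _ (by omega))
          exact absurd (hjje.symm.trans hij) (hy jj hjj)
        · rw [if_neg hi0, if_neg hj0] at hij
          have hmodeq := hψinj _ _ (Nat.mod_lt _ (by omega)) (Nat.mod_lt _ (by omega)) hij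
          have h1 : (i - 1) % m = (j' - 1) % m := by
            have hcan : (i-1) ≡ (j'-1) [MOD m] :=
              Nat.ModEq.add_left_cancel' a hmodeq
            exact hcan
          rw [Nat.mod_eq_of_lt (by omega), Nat.mod_eq_of_lt (by omega)] at h1
          omega
      · intro i hi
        simp only []
        by_cases hi0 : i = 0
        · rw [if_pos hi0, if_neg (by omega : ¬ i + 1 = 0)]
          have e1 : (a + (i + 1 - 1)) % m = a := by
            rw [hi0]
            simp [Nat.mod_eq_of_lt ha]
          rw [e1, hae]
          exact hadj.symm
        · rw [if_neg hi0, if_neg (by omega : ¬ i + 1 = 0)]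
          have hb : (a + (i - 1)) % m < m := Nat.mod_lt _ (by omega)
          have e1 : (a + (i + 1 - 1)) % m = ((a + (i - 1)) % m + 1) % m := by
            rw [(by omega : a + (i + 1 - 1) = (a + (i-1)) + 1), Nat.add_mod (a + (i-1)) 1 m,
              Nat.one_mod_eq_one.mpr (by omega : m ≠ 1)]
          rw [e1]
          exact hψadj _ hb
    have := hmax _ hnew
    omega
  -- the closed set W
  refine ⟨(Finset.range m).image f, ?_, ?_, ?_, ?_⟩
  · exact ⟨f 0, Finset.mem_image.mpr ⟨0, Finset.mem_range.mpr (by omega), rfl⟩⟩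
  · intro v hv
    obtain ⟨j, hj, rfl⟩ := Finset.mem_image.mp hv
    rw [Finset.mem_range] at hj
    by_cases hj0 : j + 1 < m
    · exact mem_supp_of_adj (hf.2 j hj0)
    · have e1 : j - 1 + 1 = j := by omega
      have := (hf.2 (j-1) (by omega)).symm
      rw [e1] at this
      exact mem_supp_of_adj this
  · calc ((Finset.range m).image f).card ≤ (Finset.range m).card := Finset.card_image_le
      _ = m := Finset.card_range m
      _ ≤ ℓ - 1 := hmlt
  · intro v hv w hw
    obtain ⟨j, hj, rfl⟩ := Finset.mem_image.mp hv
    rw [Finset.mem_range] at hj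
    have hadj : G.Adj (f j) w := (SimpleGraph.mem_neighborFinset G _ w).mp hw
    by_contra hwm
    have hy : ∀ j', j' < m → f j' ≠ w := by
      intro j' hj' he
      exact hwm (Finset.mem_image.mpr ⟨j', Finset.mem_range.mpr hj', he⟩)
    exact hclosure w hy j hj hadj

/-- Erdős–Gallai: a graph with no path on `ℓ` vertices has degree sum
at most `(ℓ-2) * |supp|`. -/
theorem EG_aux (ℓ : ℕ) (hl : 4 ≤ ℓ) :
    ∀ s : ℕ, ∀ G : SimpleGraph (Fin n), (supp G).card ≤ s → ¬ HasPath G ℓ →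
    DS G ≤ (ℓ - 2) * (supp G).card := by
  intro s
  induction s with
  | zero =>
    intro G hc _
    have he : supp G = ∅ := Finset.card_eq_zero.mp (by omega)
    rw [DS_eq_sum_supp, he]
    simp
  | succ s ih =>
    intro G hc hfree
    rcases (supp G).eq_empty_or_nonempty with he | hne
    · rw [DS_eq_sum_supp, he]; simp
    by_cases hlow : ∃ v ∈ supp G, 2 * G.degree v ≤ ℓ - 2
    · obtain ⟨v, hv, hdv⟩ := hlow
      set G' := del G {v} with hG'
      have hfree' : ¬ HasPath G' ℓ := fun h => hfree (h.mono (del_le G {v}))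
      have hsub : supp G' ⊆ supp G \ {v} := supp_del_subset G {v}
      have hcard' : (supp G').card ≤ s := by
        have h1 : (supp G \ {v}).card = (supp G).card - 1 := by
          rw [Finset.card_sdiff_of_subset (Finset.singleton_subset_iff.mpr hv)]
          simp
        have h2 := Finset.card_le_card hsub
        have h3 : 1 ≤ (supp G).card := Finset.card_pos.mpr ⟨v, hv⟩
        omega
      have hIH := ih G' hcard' hfree'
      have hDS : DS G ≤ DS G' + 2 * G.degree v := by
        have := DS_le_del_add G {v}
        simpa using this
      have hs1 : (supp G').card ≤ (supp G).card - 1 := by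
        have h1 : (supp G \ {v}).card = (supp G).card - 1 := by
          rw [Finset.card_sdiff_of_subset (Finset.singleton_subset_iff.mpr hv)]
          simp
        have h2 := Finset.card_le_card hsub
        omega
      have h3 : 1 ≤ (supp G).card := Finset.card_pos.mpr ⟨v, hv⟩
      have hmul : (ℓ - 2) * (supp G').card ≤ (ℓ - 2) * ((supp G).card - 1) :=
        Nat.mul_le_mul_left _ hs1
      have hfin : (ℓ - 2) * ((supp G).card - 1) + (ℓ - 2) = (ℓ - 2) * (supp G).card := by
        have e1 : (supp G).card - 1 + 1 = (supp G).card := by omega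
        calc (ℓ - 2) * ((supp G).card - 1) + (ℓ - 2)
            = (ℓ - 2) * ((supp G).card - 1 + 1) := by ring
          _ = (ℓ - 2) * (supp G).card := by rw [e1]
      omega
    · push_neg at hlow
      obtain ⟨W, hWne, hWsupp, hWcard, hWclosed⟩ := cycle_closure G ℓ hl hfree hne hlow
      -- degrees inside W
      have hdegW : ∀ v ∈ W, G.degree v ≤ W.card - 1 := by
        intro v hv
        rw [SimpleGraph.degree]
        have h1 : G.neighborFinset v ⊆ W.erase v := by
          intro w hw
          rw [Finset.mem_erase]
          refine ⟨?_, hWclosed v hv hw⟩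
          rintro rfl
          exact G.irrefl ((SimpleGraph.mem_neighborFinset G _ _).mp hw)
        calc (G.neighborFinset v).card ≤ (W.erase v).card := Finset.card_le_card h1
          _ = W.card - 1 := Finset.card_erase_of_mem hv
      -- edge split
      have hsplitDS : DS G = (∑ v ∈ W, G.degree v) + DS (del G W) := by
        have hdel : ∀ v, v ∉ W → (del G W).degree v = G.degree v := by
          intro v hv
          rw [SimpleGraph.degree, SimpleGraph.degree]
          congr 1
          ext w
          rw [SimpleGraph.mem_neighborFinset, SimpleGraph.mem_neighborFinset, del_adj]
          constructor
          · exact fun h => h.1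
          · intro h
            refine ⟨h, hv, ?_⟩
            intro hwW
            exact hv (hWclosed w hwW ((SimpleGraph.mem_neighborFinset G _ _).mpr h.symm))
        have h1 : DS (del G W) = ∑ v ∈ Wᶜ, G.degree v := by
          rw [DS, ← Finset.sum_compl_add_sum W]
          have h0 : ∑ u ∈ W, (del G W).degree u = 0 :=
            Finset.sum_eq_zero (fun u hu => del_deg_mem G W hu)
          rw [h0, add_zero]
          exact Finset.sum_congr rfl (fun v hv => hdel v (Finset.mem_compl.mp hv))
        rw [h1, DS, ← Finset.sum_compl_add_sum W]
        ring
      -- apply IH to del G W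
      have hWpos : 1 ≤ W.card := Finset.card_pos.mpr hWne
      have hsub : supp (del G W) ⊆ supp G \ W := supp_del_subset G W
      have hcard' : (supp (del G W)).card ≤ s := by
        have h1 : (supp G \ W).card = (supp G).card - W.card :=
          Finset.card_sdiff_of_subset hWsupp
        have h2 := Finset.card_le_card hsub
        omega
      have hIH := ih (del G W) hcard' (fun h => hfree (h.mono (del_le G W)))
      have hsuppdel : (supp (del G W)).card ≤ (supp G).card - W.card := by
        have h1 : (supp G \ W).card = (supp G).card - W.card :=
          Finset.card_sdiff_of_subset hWsupp
        have h2 := Finset.card_le_card hsub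
        omega
      have hsumW : ∑ v ∈ W, G.degree v ≤ (ℓ - 2) * W.card := by
        calc ∑ v ∈ W, G.degree v ≤ ∑ _v ∈ W, (W.card - 1) := Finset.sum_le_sum hdegW
          _ = W.card * (W.card - 1) := by rw [Finset.sum_const, smul_eq_mul]
          _ ≤ W.card * (ℓ - 2) := Nat.mul_le_mul_left _ (by omega)
          _ = (ℓ - 2) * W.card := Nat.mul_comm _ _
      have hWlesupp : W.card ≤ (supp G).card := Finset.card_le_card hWsupp
      have hmul2 : (ℓ - 2) * (supp (del G W)).card ≤ (ℓ - 2) * ((supp G).card - W.card) :=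
        Nat.mul_le_mul_left _ hsuppdel
      have hfin : (ℓ - 2) * ((supp G).card - W.card) + (ℓ - 2) * W.card
          = (ℓ - 2) * (supp G).card := by
        rw [← Nat.mul_add]
        congr 1
        omega
      omega

theorem EG (ℓ : ℕ) (hl : 4 ≤ ℓ) (G : SimpleGraph (Fin n)) (hfree : ¬ HasPath G ℓ) :
    DS G ≤ (ℓ - 2) * n := by
  have h1 := EG_aux ℓ hl (supp G).card G le_rfl hfree
  have h2 : (supp G).card ≤ n := by
    calc (supp G).card ≤ (Finset.univ : Finset (Fin n)).card := Finset.card_le_univ _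
      _ = n := by simp
  calc DS G ≤ (ℓ - 2) * (supp G).card := h1
    _ ≤ (ℓ - 2) * n := Nat.mul_le_mul_left _ h2


/-! ### Disjoint families of paths -/

/-- `j` pairwise disjoint paths on `ℓ` vertices each, as functions. -/
def DisjPaths (G : SimpleGraph (Fin n)) (j ℓ : ℕ) (F : ℕ → ℕ → Fin n) : Prop :=
  (∀ a, a < j → IsFP G ℓ (F a)) ∧
  (∀ a b s t, a < j → b < j → s < ℓ → t < ℓ → F a s = F b t → a = b)

lemma DisjPaths.mono_t {G : SimpleGraph (Fin n)} {j ℓ : ℕ} {F} (h : DisjPaths G j ℓ F)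
    {j' : ℕ} (hj : j' ≤ j) : DisjPaths G j' ℓ F :=
  ⟨fun a ha => h.1 a (by omega), fun a b s t ha hb hs ht he =>
    h.2 a b s t (by omega) (by omega) hs ht he⟩

lemma DisjPaths.toGContains {G : SimpleGraph (Fin n)} {j ℓ : ℕ} {F}
    (h : DisjPaths G j ℓ F) : GContains G (kPaths j ℓ) := by
  refine ⟨⟨fun p => F p.1 p.2, ?_⟩, ?_⟩
  · rintro ⟨a, s⟩ ⟨b, t⟩ he
    simp only [] at he
    have hab : (a : ℕ) = (b : ℕ) := h.2 a b s t a.isLt b.isLt s.isLt t.isLt he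
    have hst : (s : ℕ) = (t : ℕ) := by
      apply (h.1 a a.isLt).1 s t s.isLt t.isLt
      rw [he, hab]
    ext
    · exact hab
    · exact hst
  · rintro ⟨a, s⟩ ⟨b, t⟩ hadj
    obtain ⟨hab, hst⟩ := hadj
    simp only [] at hab hst ⊢
    subst hab
    rcases hst with h1 | h1
    · have := (h.1 a a.isLt).2 s (by omega)
      rwa [h1] at this
    · have := (h.1 a a.isLt).2 t (by omega)
      rw [h1] at this
      exact this.symm

/-- The vertex set used by the first `t` paths of a family. -/
def PU (F : ℕ → ℕ → Fin n) (t ℓ : ℕ) : Finset (Fin n) :=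
  (Finset.range t).biUnion (fun a => (Finset.range ℓ).image (F a))

lemma mem_PU {F : ℕ → ℕ → Fin n} {t ℓ : ℕ} {v : Fin n} :
    v ∈ PU F t ℓ ↔ ∃ a, a < t ∧ ∃ s, s < ℓ ∧ F a s = v := by
  simp [PU]

lemma PU_card_le {F : ℕ → ℕ → Fin n} {t ℓ : ℕ} : (PU F t ℓ).card ≤ t * ℓ := by
  calc (PU F t ℓ).card ≤ ∑ _a ∈ Finset.range t, ℓ := by
        apply le_trans (Finset.card_biUnion_le)
        apply Finset.sum_le_sum
        intro a _
        exact le_trans Finset.card_image_le (by simp)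
    _ = t * ℓ := by simp [Finset.sum_const, Nat.mul_comm]

lemma IsFP.del_notmem {G : SimpleGraph (Fin n)} {A : Finset (Fin n)} {m : ℕ} {g : ℕ → Fin n}
    (hg : IsFP (del G A) m g) (hm : 2 ≤ m) : ∀ s, s < m → g s ∉ A := by
  intro s hs
  by_cases h1 : s + 1 < m
  · exact (hg.2 s h1).2.1
  · have hs1 : s - 1 + 1 = s := by omega
    have := (hg.2 (s-1) (by omega)).2.2
    rwa [hs1] at this

/-- Extraction of a saturating disjoint family of `ℓ`-paths avoiding nothing:
one cannot extend it, i.e. deleting its vertices kills all `ℓ`-paths. -/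
lemma exists_sat_family (G : SimpleGraph (Fin n)) (j ℓ : ℕ)
    (hfree : ¬ ∃ F, DisjPaths G j ℓ F) (hl : 2 ≤ ℓ) (hn0 : 0 < n) :
    ∃ t F, t < j ∧ DisjPaths G t ℓ F ∧ ¬ HasPath (del G (PU F t ℓ)) ℓ := by
  have key : ∀ d t F, DisjPaths G t ℓ F → j ≤ t + d →
      ∃ t' F', t' < j ∧ DisjPaths G t' ℓ F' ∧ ¬ HasPath (del G (PU F' t' ℓ)) ℓ := by
    intro d
    induction d with
    | zero =>
      intro t F hF hj
      exact absurd ⟨F, hF.mono_t hj⟩ hfree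
    | succ d ih =>
      intro t F hF hj
      have htj : t < j := by
        by_contra h
        exact hfree ⟨F, hF.mono_t (by omega)⟩
      by_cases hstop : HasPath (del G (PU F t ℓ)) ℓ
      · obtain ⟨g, hg⟩ := hstop
        set F' : ℕ → ℕ → Fin n := fun a => if a = t then g else F a with hF'
        have hF'paths : DisjPaths G (t+1) ℓ F' := by
          constructor
          · intro a ha
            by_cases h : a = t
            · simp only [hF', if_pos h]
              exact hg.mono (del_le _ _)
            · simp only [hF', if_neg h]
              exact hF.1 a (by omega)
          · intro a b s u ha hb hs hu he
            by_cases h1 : a = t <;> by_cases h2 : b = t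
            · omega
            · simp only [hF', if_pos h1, if_neg h2] at he
              exfalso
              apply hg.del_notmem hl s hs
              rw [he]
              exact mem_PU.mpr ⟨b, by omega, u, hu, rfl⟩
            · simp only [hF', if_neg h1, if_pos h2] at he
              exfalso
              apply hg.del_notmem hl u hu
              rw [← he]
              exact mem_PU.mpr ⟨a, by omega, s, hs, rfl⟩
            · simp only [hF', if_neg h1, if_neg h2] at he
              exact hF.2 a b s u (by omega) (by omega) hs hu he
        exact ih (t+1) F' hF'paths (by omega)
      · exact ⟨t, F, htj, hF, hstop⟩
  exact key j 0 (fun _ _ => ⟨0, hn0⟩) ⟨fun a ha => by omega, fun a b s t ha hb => by omega⟩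
    (by omega)

/-- Build a zigzag path of length `ℓ` alternating between `H = ℓ - h` "common" vertices
and `h = ℓ/2` "centre" vertices. -/
lemma zigzag_path (G : SimpleGraph (Fin n)) (ℓ : ℕ) (hl : 4 ≤ ℓ)
    (c s : ℕ → Fin n)
    (hcinj : ∀ i i', i < ℓ - ℓ/2 → i' < ℓ - ℓ/2 → c i = c i' → i = i')
    (hsinj : ∀ i i', i < ℓ/2 → i' < ℓ/2 → s i = s i' → i = i')
    (hdisj : ∀ i i', i < ℓ - ℓ/2 → i' < ℓ/2 → c i ≠ s i')
    (hadj : ∀ i i', i < ℓ - ℓ/2 → i' < ℓ/2 → G.Adj (c i) (s i')) :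
    IsFP G ℓ (fun t => if t % 2 = 0 then c (t/2) else s (t/2)) := by
  constructor
  · intro i j hi hj he
    simp only [] at he
    by_cases h1 : i % 2 = 0 <;> by_cases h2 : j % 2 = 0
    · rw [if_pos h1, if_pos h2] at he
      have := hcinj (i/2) (j/2) (by omega) (by omega) he
      omega
    · rw [if_pos h1, if_neg h2] at he
      exact absurd he (hdisj (i/2) (j/2) (by omega) (by omega))
    · rw [if_neg h1, if_pos h2] at he
      exact absurd he.symm (hdisj (j/2) (i/2) (by omega) (by omega))
    · rw [if_neg h1, if_neg h2] at he
      have := hsinj (i/2) (j/2) (by omega) (by omega) he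
      omega
  · intro i hi
    simp only []
    by_cases h1 : i % 2 = 0
    · rw [if_pos h1, if_neg (by omega : ¬ (i+1) % 2 = 0)]
      have e1 : (i+1)/2 = i/2 := by omega
      rw [e1]
      exact hadj (i/2) (i/2) (by omega) (by omega)
    · rw [if_neg h1, if_pos (by omega : (i+1) % 2 = 0)]
      have e1 : (i+1)/2 = i/2 + 1 := by omega
      rw [e1]
      exact (hadj (i/2 + 1) (i/2) (by omega) (by omega)).symm


/-! ### The core lemma -/

lemma degree_le_n (G : SimpleGraph (Fin n)) (v : Fin n) : G.degree v ≤ n := by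
  calc G.degree v ≤ (Finset.univ : Finset (Fin n)).card := Finset.card_le_univ _
    _ = n := by simp

lemma sum_deg_le (G : SimpleGraph (Fin n)) (A : Finset (Fin n)) :
    ∑ v ∈ A, G.degree v ≤ A.card * n := by
  calc ∑ v ∈ A, G.degree v ≤ ∑ _v ∈ A, n := Finset.sum_le_sum (fun v _ => degree_le_n G v)
    _ = A.card * n := by rw [Finset.sum_const, smul_eq_mul]

lemma coefA (j h ℓ t : ℕ) (hj : 2 ≤ j) (hh : 2 ≤ h) (hℓ : ℓ ≤ 2*h + 1) (ht : t = j - 1) :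
    ℓ + 2*t*(h-1) + t ≤ 2*(j*h) := by
  obtain ⟨j2, rfl⟩ : ∃ j2, j = j2 + 2 := ⟨j - 2, by omega⟩
  obtain ⟨h2, rfl⟩ : ∃ h2, h = h2 + 2 := ⟨h - 2, by omega⟩
  have e1 : h2 + 2 - 1 = h2 + 1 := by omega
  have e2 : t = j2 + 1 := by omega
  rw [e1, e2]
  nlinarith

lemma coefB (j h ℓ t : ℕ) (hj : 2 ≤ j) (hh : 2 ≤ h) (hℓ : ℓ ≤ 2*h + 1) (ht : t ≤ j - 2)
    (ht1 : 1 ≤ t) : ℓ + 2*(h-1) + 2*t*(h-1) + t ≤ 2*(j*h) := by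
  obtain ⟨j2, rfl⟩ : ∃ j2, j = j2 + 2 := ⟨j - 2, by omega⟩
  obtain ⟨h2, rfl⟩ : ∃ h2, h = h2 + 2 := ⟨h - 2, by omega⟩
  have e1 : h2 + 2 - 1 = h2 + 1 := by omega
  have e2 : t ≤ j2 := by omega
  rw [e1]
  nlinarith

/-- The core lemma: in a graph with no `j` disjoint `ℓ`-paths but many edges, there is
an `(ℓ/2)`-set avoiding `Y` whose common neighborhood has at least `T` elements. -/
lemma core_lemma (k ℓ T : ℕ) (hk : 2 ≤ k) (hl : 4 ≤ ℓ)
    (j : ℕ) (hj2 : 2 ≤ j) (hjk : j ≤ k)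
    (G : SimpleGraph (Fin n)) (Y : Finset (Fin n)) (hYc : Y.card ≤ ℓ/2 - 1)
    (hfree : ¬ ∃ F, DisjPaths G j ℓ F)
    (hE : 2 * (j * (ℓ/2)) * n ≤ DS G + 2 * (k*k*(ℓ/2)*(ℓ/2)) + 2 * n)
    (hM : 2 * ((ℓ - ℓ/2 + 1) * (ℓ.choose (ℓ/2) * T)) + 3*(k*k*ℓ*ℓ) + 1 ≤ n) :
    ∃ S : Finset (Fin n), (∀ y ∈ Y, y ∉ S) ∧ S.card = ℓ/2 ∧
      T ≤ (commonNbhd G ↑S).ncard := by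
  classical
  rcases Nat.eq_zero_or_pos T with hT0 | hT1
  · have hnl : ℓ ≤ k*k*ℓ*ℓ := by
      have h1 : 1 ≤ k*k*ℓ := by
        have h0 : 0 < k*k*ℓ := by positivity
        omega
      calc ℓ = 1 * ℓ := (one_mul ℓ).symm
        _ ≤ (k*k*ℓ) * ℓ := Nat.mul_le_mul_right ℓ h1
        _ = k*k*ℓ*ℓ := by ring
    have hYn : Y.card ≤ ℓ := by omega
    have hcard : ℓ/2 ≤ (Finset.univ \ Y).card := by
      have h1 : (Finset.univ \ Y).card = n - Y.card := by
        rw [Finset.card_sdiff_of_subset (Finset.subset_univ Y)]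
        simp
      omega
    obtain ⟨S, hS1, hS2⟩ := Finset.exists_subset_card_eq hcard
    refine ⟨S, ?_, hS2, by omega⟩
    intro y hy hyS
    have hz := hS1 hyS
    rw [Finset.mem_sdiff] at hz
    exact hz.2 hy
  set h := ℓ/2 with hh
  set H := ℓ - ℓ/2 with hH
  have hh2 : 2 ≤ h := by omega
  have hH2 : 2 ≤ H ∧ H ≤ h + 1 ∧ h ≤ H ∧ h + H = ℓ := by omega
  have hl2h : ℓ ≤ 2*h + 1 := by omega
  have hn0 : 0 < n := by omega
  set c1 := 3*(k*k*ℓ*ℓ) with hc1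
  have hCC : 2*(k*k*h*h) + k*k*ℓ*ℓ ≤ c1 := by
    have : k*k*h*h ≤ k*k*ℓ*ℓ := by
      apply Nat.mul_le_mul
      · apply Nat.mul_le_mul_left; omega
      · omega
    omega
  -- the saturating family in G - Y
  obtain ⟨t, F, htj, hF, hsat⟩ := exists_sat_family (del G Y) j ℓ
    (fun ⟨F', hF'⟩ => hfree ⟨F', ⟨fun a ha => (hF'.1 a ha).mono (del_le _ _), hF'.2⟩⟩)
    (by omega) hn0
  set U := PU F t ℓ with hU
  rw [del_del] at hsat
  -- t = 0 is impossible
  rcases Nat.eq_zero_or_pos t with ht0 | ht1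
  · exfalso
    subst ht0
    have hUe : U = ∅ := by simp [hU, PU]
    have hEG : DS (del G (Y ∪ U)) ≤ (ℓ - 2) * n := EG ℓ hl _ hsat
    have hdel : DS G ≤ DS (del G (Y ∪ U)) + 2 * ((Y ∪ U).card * n) :=
      le_trans (DS_le_del_add G (Y ∪ U))
        (by have := sum_deg_le G (Y ∪ U); omega)
    have hYU : (Y ∪ U).card ≤ h - 1 := by
      rw [hUe, Finset.union_empty]; omega
    have hsub : (ℓ - 2) * n + 2 * n = ℓ * n := by
      rw [← Nat.add_mul]; congr 1; omega
    have hcoef : 4 * h ≤ 2 * (j * h) := by nlinarith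
    have hc4 : 4 * (h * n) ≤ 2 * (j * h) * n := by
      calc 4 * (h * n) = (4 * h) * n := by ring
        _ ≤ (2 * (j * h)) * n := Nat.mul_le_mul_right n hcoef
    have hYUn : (Y ∪ U).card * n ≤ (h-1) * n := Nat.mul_le_mul_right n hYU
    have hln : ℓ * n ≤ 2*(h*n) + n := by
      calc ℓ * n ≤ (2*h+1) * n := Nat.mul_le_mul_right n hl2h
        _ = 2*(h*n) + n := by ring
    have hhn : (h-1)*n + n = h * n := by
      have e : h - 1 + 1 = h := by omega
      calc (h-1)*n + n = (h-1+1) * n := by ring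
        _ = h * n := by rw [e]
    omega
  -- per-path vertex sets
  set Pa : ℕ → Finset (Fin n) := fun a => (Finset.range ℓ).image (F a) with hPa
  have hPacard : ∀ a, a < t → (Pa a).card = ℓ := by
    intro a ha
    rw [hPa]
    rw [Finset.card_image_of_injOn, Finset.card_range]
    intro x hx y hy hxy
    exact (hF.1 a ha).1 x y (Finset.mem_range.mp hx) (Finset.mem_range.mp hy) hxy
  have hPaU : ∀ a, a < t → Pa a ⊆ U := by
    intro a ha v hv
    obtain ⟨s, hs, rfl⟩ := Finset.mem_image.mp hv
    exact mem_PU.mpr ⟨a, ha, s, Finset.mem_range.mp hs, rfl⟩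
  have hPadisj : ∀ a b, a < t → b < t → a ≠ b → Disjoint (Pa a) (Pa b) := by
    intro a b ha hb hab
    rw [Finset.disjoint_left]
    intro v hva hvb
    obtain ⟨s, hs, hse⟩ := Finset.mem_image.mp hva
    obtain ⟨u, hu, hue⟩ := Finset.mem_image.mp hvb
    exact hab (hF.2 a b s u ha hb (Finset.mem_range.mp hs) (Finset.mem_range.mp hu)
      (by rw [hse, hue]))
  have hUcard : U.card ≤ k * ℓ := by
    calc U.card ≤ t * ℓ := PU_card_le
      _ ≤ k * ℓ := Nat.mul_le_mul_right ℓ (by omega)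
  -- mass decomposition
  have hUdecomp : ∀ v, (G.neighborFinset v ∩ U).card
      = ∑ a ∈ Finset.range t, (G.neighborFinset v ∩ Pa a).card := by
    intro v
    have he : G.neighborFinset v ∩ U
        = (Finset.range t).biUnion (fun a => G.neighborFinset v ∩ Pa a) := by
      ext w
      simp only [Finset.mem_inter, Finset.mem_biUnion, Finset.mem_range]
      constructor
      · rintro ⟨hw, hwU⟩
        obtain ⟨a, ha, s, hs, rfl⟩ := mem_PU.mp hwU
        exact ⟨a, ha, hw, Finset.mem_image.mpr ⟨s, Finset.mem_range.mpr hs, rfl⟩⟩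
      · rintro ⟨a, ha, hw, hwP⟩
        exact ⟨hw, hPaU a ha hwP⟩
    rw [he, Finset.card_biUnion]
    intro a ha b hb hab
    exact Finset.disjoint_of_subset_left Finset.inter_subset_right
      (Finset.disjoint_of_subset_right Finset.inter_subset_right
        (hPadisj a b (Finset.mem_range.mp ha) (Finset.mem_range.mp hb) hab))
  set mass := ∑ v ∈ Uᶜ, (G.neighborFinset v ∩ U).card with hmass
  set massOf : ℕ → ℕ := fun a => ∑ v ∈ Uᶜ, (G.neighborFinset v ∩ Pa a).card with hmassOf
  have hmass_eq : mass = ∑ a ∈ Finset.range t, massOf a := by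
    rw [hmass, hmassOf]
    rw [Finset.sum_congr rfl (fun v _ => hUdecomp v)]
    exact Finset.sum_comm
  -- best path
  obtain ⟨astar, hastar, hbest⟩ := Finset.exists_max_image (Finset.range t) massOf
    ⟨0, Finset.mem_range.mpr (by omega)⟩
  have hastart : astar < t := Finset.mem_range.mp hastar
  have hmass_le : mass ≤ t * massOf astar := by
    rw [hmass_eq]
    calc ∑ a ∈ Finset.range t, massOf a ≤ (Finset.range t).card • massOf astar :=
          Finset.sum_le_card_nsmul _ _ _ (fun a ha => hbest a ha)
      _ = t * massOf astar := by rw [Finset.card_range, smul_eq_mul]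
  set P := Pa astar with hP
  have hPcard : P.card = ℓ := hPacard astar hastart
  have hPY : ∀ y ∈ Y, y ∉ P := by
    intro y hy hyP
    obtain ⟨s, hs, hse⟩ := Finset.mem_image.mp hyP
    have := (hF.1 astar hastart).del_notmem (by omega) s (Finset.mem_range.mp hs)
    rw [hse] at this
    exact this hy
  -- rich vertices
  set RICH := Uᶜ.filter (fun v => h ≤ (G.neighborFinset v ∩ P).card) with hRICH
  have hmassb_le : massOf astar ≤ (h-1) * n + (H+1) * RICH.card := by
    have hperv : ∀ v ∈ Uᶜ, (G.neighborFinset v ∩ P).card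
        ≤ (h-1) + (if v ∈ RICH then H+1 else 0) := by
      intro v hv
      by_cases hvR : v ∈ RICH
      · rw [if_pos hvR]
        calc (G.neighborFinset v ∩ P).card ≤ P.card := Finset.card_le_card
              Finset.inter_subset_right
          _ = ℓ := hPcard
          _ ≤ (h-1) + (H+1) := by omega
      · rw [if_neg hvR]
        have : ¬ h ≤ (G.neighborFinset v ∩ P).card := by
          intro hc
          exact hvR (Finset.mem_filter.mpr ⟨hv, hc⟩)
        omega
    calc massOf astar ≤ ∑ v ∈ Uᶜ, ((h-1) + (if v ∈ RICH then H+1 else 0)) :=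
          Finset.sum_le_sum hperv
      _ = (Uᶜ.card) * (h-1) + ∑ v ∈ Uᶜ, (if v ∈ RICH then H+1 else 0) := by
          rw [Finset.sum_add_distrib, Finset.sum_const, smul_eq_mul]
      _ ≤ n * (h-1) + ∑ v ∈ Uᶜ, (if v ∈ RICH then H+1 else 0) := by
          have : Uᶜ.card ≤ n := by
            calc Uᶜ.card ≤ (Finset.univ : Finset (Fin n)).card := Finset.card_le_univ _
              _ = n := by simp
          exact Nat.add_le_add_right (Nat.mul_le_mul_right _ this) _
      _ = (h-1) * n + (H+1) * RICH.card := by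
          rw [hRICH]
          rw [Finset.sum_ite_mem]
          have : Uᶜ ∩ Uᶜ.filter (fun v => h ≤ (G.neighborFinset v ∩ P).card)
              = Uᶜ.filter (fun v => h ≤ (G.neighborFinset v ∩ P).card) := by
            apply Finset.inter_eq_right.mpr
            exact Finset.filter_subset _ _
          rw [this, Finset.sum_const, smul_eq_mul, Nat.mul_comm (h-1) n]
          ring
  -- main bound : n ≤ 2(H+1)·RICH + c1
  have hinU : ∑ u ∈ U, (G.neighborFinset u ∩ U).card ≤ k*k*ℓ*ℓ := by
    calc ∑ u ∈ U, (G.neighborFinset u ∩ U).card ≤ ∑ _u ∈ U, U.card :=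
          Finset.sum_le_sum (fun u _ => Finset.card_le_card Finset.inter_subset_right)
      _ = U.card * U.card := by rw [Finset.sum_const, smul_eq_mul]
      _ ≤ (k*ℓ) * (k*ℓ) := Nat.mul_le_mul hUcard hUcard
      _ = k*k*ℓ*ℓ := by ring
  have hsplit := DS_split G U
  have hKEY : n ≤ 2*((H+1)*RICH.card) + c1 := by
    have hmassb2 : 2 * mass ≤ 2*(t*((h-1)*n)) + 2*(t*((H+1)*RICH.card)) := by
      calc 2 * mass ≤ 2 * (t * massOf astar) := by omega
        _ ≤ 2 * (t * ((h-1) * n + (H+1) * RICH.card)) := by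
            have := Nat.mul_le_mul_left t hmassb_le
            omega
        _ = 2*(t*((h-1)*n)) + 2*(t*((H+1)*RICH.card)) := by ring
    -- two cases for the Pℓ-free part
    have hDSdel : DS (del G U) + 2 * n ≤ ℓ * n + 2*((h-1)*n) ∧
        (t = j - 1 → DS (del G U) + 2 * n ≤ ℓ * n) := by
      constructor
      · -- general bound via Y-removal
        have hEG : DS (del G (U ∪ Y)) ≤ (ℓ - 2) * n := by
          apply EG ℓ hl
          rwa [Finset.union_comm Y U] at hsat
        have h1 : DS (del G U) ≤ DS (del (del G U) Y) + 2 * ∑ y ∈ Y, (del G U).degree y :=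
          DS_le_del_add (del G U) Y
        rw [del_del] at h1
        have h2 : ∑ y ∈ Y, (del G U).degree y ≤ (h-1) * n := by
          calc ∑ y ∈ Y, (del G U).degree y ≤ Y.card * n := sum_deg_le _ Y
            _ ≤ (h-1) * n := Nat.mul_le_mul_right n hYc
        have hsub : (ℓ - 2) * n + 2 * n = ℓ * n := by
          rw [← Nat.add_mul]; congr 1; omega
        omega
      · -- if the family is full, del G U is already path-free
        intro htj1
        have hnopath : ¬ HasPath (del G U) ℓ := by
          rintro ⟨g, hg⟩
          apply hfree
          refine ⟨fun a => if a = t then g else F a, ?_, ?_⟩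
          · intro a ha
            simp only []
            by_cases hat : a = t
            · rw [if_pos hat]
              exact hg.mono (del_le _ _)
            · rw [if_neg hat]
              exact ((hF.1 a (by omega)).mono (del_le _ _))
          · intro a b s u ha hb hs hu he
            simp only [] at he
            by_cases h1 : a = t <;> by_cases h2 : b = t
            · omega
            · rw [if_pos h1, if_neg h2] at he
              exfalso
              apply hg.del_notmem (by omega) s hs
              rw [he]
              exact hPaU b (by omega) (Finset.mem_image.mpr ⟨u, Finset.mem_range.mpr hu, rfl⟩)
            · rw [if_neg h1, if_pos h2] at he
              exfalso
              apply hg.del_notmem (by omega) u hu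
              rw [← he]
              exact hPaU a (by omega) (Finset.mem_image.mpr ⟨s, Finset.mem_range.mpr hs, rfl⟩)
            · rw [if_neg h1, if_neg h2] at he
              exact hF.2 a b s u (by omega) (by omega) hs hu he
        have hEG : DS (del G U) ≤ (ℓ - 2) * n := EG ℓ hl _ hnopath
        have hsub : (ℓ - 2) * n + 2 * n = ℓ * n := by
          rw [← Nat.add_mul]; congr 1; omega
        omega
    rcases Nat.lt_or_ge t (j-1) with hcase | hcase
    · -- case B : t ≤ j - 2
      have hco := coefB j h ℓ t hj2 hh2 hl2h (by omega) ht1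
      have hcon : (ℓ + 2*(h-1) + 2*t*(h-1) + t) * n ≤ 2*(j*h)*n :=
        Nat.mul_le_mul_right n hco
      have hexp : (ℓ + 2*(h-1) + 2*t*(h-1) + t) * n
          = ℓ*n + 2*((h-1)*n) + 2*(t*((h-1)*n)) + t*n := by ring
      have hd := hDSdel.1
      have htc1 : c1 ≤ t * c1 := by
        calc c1 = 1 * c1 := by ring
          _ ≤ t * c1 := Nat.mul_le_mul_right c1 ht1
      have hfin : t * n ≤ 2*(t*((H+1)*RICH.card)) + t*c1 := by
        have hCC2 : ∑ u ∈ U, (G.neighborFinset u ∩ U).card + 2*(k*k*h*h) ≤ c1 := by omega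
        omega
      have := Nat.le_of_mul_le_mul_left (by
        calc t * n = t * n := rfl
          _ ≤ 2*(t*((H+1)*RICH.card)) + t*c1 := hfin
          _ = t * (2*((H+1)*RICH.card) + c1) := by ring) (by omega : 0 < t)
      exact this
    · -- case A : t = j - 1
      have htj1 : t = j - 1 := by omega
      have hco := coefA j h ℓ t hj2 hh2 hl2h htj1
      have hcon : (ℓ + 2*t*(h-1) + t) * n ≤ 2*(j*h)*n :=
        Nat.mul_le_mul_right n hco
      have hexp : (ℓ + 2*t*(h-1) + t) * n = ℓ*n + 2*(t*((h-1)*n)) + t*n := by ring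
      have hd := hDSdel.2 htj1
      have htc1 : c1 ≤ t * c1 := by
        calc c1 = 1 * c1 := by ring
          _ ≤ t * c1 := Nat.mul_le_mul_right c1 ht1
      have hfin : t * n ≤ 2*(t*((H+1)*RICH.card)) + t*c1 := by
        have hCC2 : ∑ u ∈ U, (G.neighborFinset u ∩ U).card + 2*(k*k*h*h) ≤ c1 := by omega
        omega
      have := Nat.le_of_mul_le_mul_left (by
        calc t * n = t * n := rfl
          _ ≤ 2*(t*((H+1)*RICH.card)) + t*c1 := hfin
          _ = t * (2*((H+1)*RICH.card) + c1) := by ring) (by omega : 0 < t)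
      exact this
  -- pigeonhole on the traces
  have hTR : ℓ.choose h * T ≤ RICH.card := by
    have h1 : 2*((H+1)*(ℓ.choose h * T)) + c1 ≤ 2*((H+1)*RICH.card) + c1 := by
      calc 2*((H+1)*(ℓ.choose h * T)) + c1 ≤ n := by omega
        _ ≤ 2*((H+1)*RICH.card) + c1 := hKEY
    have h1' : 2*((H+1)*(ℓ.choose h * T)) ≤ 2*((H+1)*RICH.card) :=
      Nat.add_le_add_iff_right.mp h1
    have h2 : (H+1)*(ℓ.choose h * T) ≤ (H+1)*RICH.card :=
      Nat.le_of_mul_le_mul_left h1' (by omega)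
    exact Nat.le_of_mul_le_mul_left h2 (by omega)
  -- choose an h-subset of the trace of each rich vertex
  have hexS : ∀ v : Fin n, ∃ S : Finset (Fin n), v ∈ RICH →
      (S ⊆ G.neighborFinset v ∩ P ∧ S.card = h) := by
    intro v
    by_cases hv : v ∈ RICH
    · have : h ≤ (G.neighborFinset v ∩ P).card := (Finset.mem_filter.mp hv).2
      obtain ⟨S, hS1, hS2⟩ := Finset.exists_subset_card_eq this
      exact ⟨S, fun _ => ⟨hS1, hS2⟩⟩
    · exact ⟨∅, fun h => absurd h hv⟩
  choose φ hφ using hexS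
  have hmaps : ∀ v ∈ RICH, φ v ∈ P.powersetCard h := by
    intro v hv
    rw [Finset.mem_powersetCard]
    obtain ⟨h1, h2⟩ := hφ v hv
    exact ⟨le_trans h1 Finset.inter_subset_right, h2⟩
  have hpowcard : (P.powersetCard h).card = ℓ.choose h := by
    rw [Finset.card_powersetCard, hPcard]
  -- find a popular subset
  have hfiber : ∃ S ∈ P.powersetCard h, T ≤ (RICH.filter (fun v => φ v = S)).card := by
    by_contra hc
    push_neg at hc
    have : RICH.card = ∑ S ∈ P.powersetCard h, (RICH.filter (fun v => φ v = S)).card :=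
      Finset.card_eq_sum_card_fiberwise hmaps
    have hbound : RICH.card ≤ (P.powersetCard h).card * (T - 1) := by
      rw [this]
      calc ∑ S ∈ P.powersetCard h, (RICH.filter (fun v => φ v = S)).card
          ≤ ∑ _S ∈ P.powersetCard h, (T-1) := by
            apply Finset.sum_le_sum
            intro S hS
            have := hc S hS
            omega
        _ = (P.powersetCard h).card * (T-1) := by rw [Finset.sum_const, smul_eq_mul]
    rw [hpowcard] at hbound
    have hchpos : 0 < ℓ.choose h := Nat.choose_pos (by omega)
    have hle : ℓ.choose h * T ≤ ℓ.choose h * (T-1) := le_trans hTR hbound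
    have := Nat.le_of_mul_le_mul_left hle hchpos
    omega
  obtain ⟨S, hSmem, hSfib⟩ := hfiber
  rw [Finset.mem_powersetCard] at hSmem
  refine ⟨S, ?_, hSmem.2, ?_⟩
  · intro y hy hyS
    exact hPY y hy (hSmem.1 hyS)
  · have hsub : (↑(RICH.filter (fun v => φ v = S)) : Set (Fin n)) ⊆ commonNbhd G ↑S := by
      intro v hv
      rw [Finset.mem_coe, Finset.mem_filter] at hv
      obtain ⟨hvR, hvS⟩ := hv
      have hvU : v ∈ Uᶜ := (Finset.mem_filter.mp hvR).1
      obtain ⟨hφ1, hφ2⟩ := hφ v hvR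
      rw [← hvS] at *
      constructor
      · -- v ∉ S
        intro hvin
        have : v ∈ U := hPaU astar hastart (Finset.inter_subset_right (hφ1 hvin))
        exact (Finset.mem_compl.mp hvU) this
      · intro u hu
        have : u ∈ G.neighborFinset v := Finset.inter_subset_left (hφ1 hu)
        exact (SimpleGraph.mem_neighborFinset G v u).mp this
    calc T ≤ (RICH.filter (fun v => φ v = S)).card := hSfib
      _ = (↑(RICH.filter (fun v => φ v = S)) : Set (Fin n)).ncard :=
          (Set.ncard_coe_finset _).symm
      _ ≤ (commonNbhd G ↑S).ncard := Set.ncard_le_ncard hsub (Set.toFinite _)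


/-! ### Assembly -/

lemma commonNbhd_mono {G G' : SimpleGraph (Fin n)} (hle : G' ≤ G) (S : Set (Fin n)) :
    commonNbhd G' S ⊆ commonNbhd G S := fun _v hv => ⟨hv.1, fun u hu => hle (hv.2 u hu)⟩

/-- The master numerical inequality. -/
lemma master_ineq (k ℓ r N : ℕ) (hk : 2 ≤ k) (hl : 4 ≤ ℓ) (hr : 3 ≤ r)
    (hn : 4 * k ^ 2 * ℓ ^ 2 * (k * ℓ + r) * (ℓ / 2 + 1) * ℓ.choose (ℓ / 2) ≤ N) :
    6 * ((ℓ - ℓ/2 + 1) * ℓ.choose (ℓ/2)) * (k*ℓ+1) + 9*(k*k*ℓ*ℓ) + 3 ≤ N := by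
  set h := ℓ/2 with hh
  set Cb := ℓ.choose (ℓ/2) with hCb
  have hCb1 : 1 ≤ Cb := Nat.choose_pos (by omega)
  set x := (h+1) * Cb with hx
  set y := k * ℓ with hy
  have hx3 : 3 ≤ x := by
    calc 3 = 3 * 1 := by ring
      _ ≤ (h+1) * Cb := Nat.mul_le_mul (by omega) hCb1
  have hy8 : 8 ≤ y := by
    calc 8 = 2 * 4 := by ring
      _ ≤ k * ℓ := Nat.mul_le_mul hk hl
  -- step0 : lower bound for N
  have h0 : 4 * (y*y) * (y + 3) * x ≤ N := by
    calc 4 * (y*y) * (y + 3) * x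
        ≤ 4 * (y*y) * (y + r) * x := by
          apply Nat.mul_le_mul_right
          apply Nat.mul_le_mul_left
          omega
      _ = 4 * k ^ 2 * ℓ ^ 2 * (k * ℓ + r) * (h + 1) * Cb := by
          rw [hy, hx]; ring
      _ ≤ N := hn
  -- bound the first term
  have hHx : (ℓ - h + 1) * Cb ≤ 2 * x := by
    calc (ℓ - h + 1) * Cb ≤ (2*(h+1)) * Cb := Nat.mul_le_mul_right Cb (by omega)
      _ = 2 * x := by rw [hx]; ring
  have t1 : 6 * ((ℓ - h + 1) * Cb) * (y+1) ≤ 24 * (x * y) := by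
    calc 6 * ((ℓ - h + 1) * Cb) * (y+1) ≤ 6 * (2*x) * (y+1) :=
          Nat.mul_le_mul_right _ (Nat.mul_le_mul_left 6 hHx)
      _ ≤ 6 * (2*x) * (y+y) := Nat.mul_le_mul_left _ (by omega)
      _ = 24 * (x * y) := by ring
  have t1' : 24 * (x*y) ≤ 4 * (x * (y*y*y)) := by
    calc 24 * (x*y) ≤ (4*(y*y)) * (x*y) := by
          apply Nat.mul_le_mul_right
          nlinarith
      _ = 4 * (x * (y*y*y)) := by ring
  have t2 : 9*(k*k*ℓ*ℓ) + 3 ≤ 12 * (x*(y*y)) := by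
    have e1 : k*k*ℓ*ℓ = y*y := by rw [hy]; ring
    have h1 : 1 ≤ y*y := by nlinarith
    have h2 : y*y ≤ x*(y*y) := by
      calc y*y = 1*(y*y) := by ring
        _ ≤ x*(y*y) := Nat.mul_le_mul_right _ (by omega)
    omega
  have hsplit : 4 * (y*y) * (y + 3) * x = 4 * (x * (y*y*y)) + 12 * (x*(y*y)) := by ring
  omega

/-- Build a zigzag `ℓ`-path through an `(ℓ/2)`-set with large common neighborhood,
avoiding a given vertex set `B` outside `S`. -/
lemma zigzag_avoid (G : SimpleGraph (Fin n)) (ℓ : ℕ) (hl : 4 ≤ ℓ)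
    (S : Finset (Fin n)) (hS : S.card = ℓ/2)
    (B : Finset (Fin n)) (T : ℕ)
    (hT : T ≤ (commonNbhd G ↑S).ncard) (hB : B.card + (ℓ - ℓ/2) ≤ T) :
    ∃ z, IsFP G ℓ z ∧
      (∀ i, i < ℓ → (z i ∈ S ∨ (z i ∈ commonNbhd G ↑S ∧ z i ∉ B))) := by
  classical
  set h := ℓ/2 with hh
  set H := ℓ - ℓ/2 with hH
  have hh2 : 2 ≤ h := by omega
  have hH2 : 2 ≤ H := by omega
  set CF := (Set.toFinite (commonNbhd G ↑S)).toFinset with hCF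
  have hCFcard : T ≤ CF.card := by
    rwa [hCF, ← Set.ncard_eq_toFinset_card]
  have hCF'card : H ≤ (CF \ B).card := by
    have h1 : CF.card ≤ (CF \ B).card + B.card := by
      calc CF.card ≤ (CF \ B ∪ B).card := Finset.card_le_card (by
            intro v hv
            by_cases hvB : v ∈ B
            · exact Finset.mem_union_right _ hvB
            · exact Finset.mem_union_left _ (Finset.mem_sdiff.mpr ⟨hv, hvB⟩))
        _ ≤ (CF \ B).card + B.card := Finset.card_union_le _ _
    omega
  obtain ⟨CH, hCHsub, hCHcard⟩ := Finset.exists_subset_card_eq hCF'card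
  have hCHmem : ∀ v ∈ CH, v ∈ commonNbhd G ↑S ∧ v ∉ B := by
    intro v hv
    have := hCHsub hv
    rw [Finset.mem_sdiff] at this
    refine ⟨?_, this.2⟩
    have := this.1
    rwa [hCF, Set.Finite.mem_toFinset] at this
  set cf : ℕ → Fin n := fun i => ↑(CH.orderIsoOfFin hCHcard ⟨i % H, Nat.mod_lt _ (by omega)⟩)
    with hcf
  set sf : ℕ → Fin n := fun i => ↑(S.orderIsoOfFin hS ⟨i % h, Nat.mod_lt _ (by omega)⟩)
    with hsf
  have hcfmem : ∀ i, cf i ∈ CH := fun i => (CH.orderIsoOfFin hCHcard _).2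
  have hsfmem : ∀ i, sf i ∈ S := fun i => (S.orderIsoOfFin hS _).2
  have hcfinj : ∀ i i', i < H → i' < H → cf i = cf i' → i = i' := by
    intro i i' hi hi' he
    rw [hcf] at he
    simp only [] at he
    have h1 := (CH.orderIsoOfFin hCHcard).injective (Subtype.ext he)
    have h2 : i % H = i' % H := by
      have := congrArg Fin.val h1
      simpa using this
    rwa [Nat.mod_eq_of_lt hi, Nat.mod_eq_of_lt hi'] at h2
  have hsfinj : ∀ i i', i < h → i' < h → sf i = sf i' → i = i' := by
    intro i i' hi hi' he
    rw [hsf] at he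
    simp only [] at he
    have h1 := (S.orderIsoOfFin hS).injective (Subtype.ext he)
    have h2 : i % h = i' % h := by
      have := congrArg Fin.val h1
      simpa using this
    rwa [Nat.mod_eq_of_lt hi, Nat.mod_eq_of_lt hi'] at h2
  have hdisj : ∀ i i', i < H → i' < h → cf i ≠ sf i' := by
    intro i i' _ _ he
    have h1 := (hCHmem _ (hcfmem i)).1
    rw [he] at h1
    exact h1.1 (hsfmem i')
  have hadj : ∀ i i', i < H → i' < h → G.Adj (cf i) (sf i') := by
    intro i i' _ _
    have h1 := (hCHmem _ (hcfmem i)).1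
    exact h1.2 (sf i') (hsfmem i')
  have hz := zigzag_path G ℓ hl cf sf hcfinj hsfinj hdisj hadj
  refine ⟨_, hz, ?_⟩
  intro i hi
  by_cases hpar : i % 2 = 0
  · rw [if_pos hpar]
    right
    exact hCHmem _ (hcfmem (i/2))
  · rw [if_neg hpar]
    left
    exact hsfmem (i/2)

/-- The downward recursion extracting `m` disjoint good sets. -/
lemma rec_lemma (k ℓ T : ℕ) (hk : 2 ≤ k) (hl : 4 ≤ ℓ)
    (X : Finset (Fin n)) (hXc : X.card ≤ ℓ/2 - 1)
    (hT : k * ℓ + 1 ≤ T)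
    (hM : 2 * ((ℓ - ℓ/2 + 1) * (ℓ.choose (ℓ/2) * T)) + 3*(k*k*ℓ*ℓ) + 1 ≤ n) :
    ∀ m : ℕ, 1 ≤ m → ∀ G : SimpleGraph (Fin n), m + 1 ≤ k →
      (¬ ∃ F, DisjPaths G (m+1) ℓ F) →
      (2 * ((m+1) * (ℓ/2)) * n ≤ DS G + 2 * (k*k*(ℓ/2)*(ℓ/2)) + 2 * n) →
      ∃ f : Fin m → Finset (Fin n),
        (∀ i j, i ≠ j → Disjoint (f i) (f j)) ∧
        ∀ i, (∀ y ∈ X, y ∉ f i) ∧ (f i).card = ℓ/2 ∧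
          T ≤ (commonNbhd G ↑(f i)).ncard := by
  intro m hm
  induction m, hm using Nat.le_induction with
  | base =>
    intro G hk1 hfree hDS
    obtain ⟨S, hSX, hScard, hST⟩ := core_lemma k ℓ T hk hl 2 le_rfl (by omega) G X hXc
      hfree hDS hM
    refine ⟨fun _ => S, ?_, ?_⟩
    · intro i j hij
      exact absurd (Subsingleton.elim i j) hij
    · intro _
      exact ⟨hSX, hScard, hST⟩
  | succ m hm1 IH =>
    intro G hmk hfree hDS
    obtain ⟨S, hSX, hScard, hST⟩ := core_lemma k ℓ T hk hl (m+1+1) (by omega) (by omega)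
      G X hXc hfree hDS hM
    set G' := del G S with hG'
    have hfree' : ¬ ∃ F, DisjPaths G' (m+1) ℓ F := by
      rintro ⟨F, hF⟩
      obtain ⟨z, hz, hzmem⟩ := zigzag_avoid G ℓ hl S hScard (PU F (m+1) ℓ) T hST (by
        have h1 : (PU F (m+1) ℓ).card ≤ (m+1) * ℓ := PU_card_le
        have h2 : (m+1) * ℓ ≤ (k-1) * ℓ := Nat.mul_le_mul_right ℓ (by omega)
        have h3 : (k-1) * ℓ + ℓ = k * ℓ := by
          have e : k - 1 + 1 = k := by omega
          calc (k-1) * ℓ + ℓ = (k-1+1) * ℓ := by ring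
            _ = k * ℓ := by rw [e]
        have h4 : ℓ - ℓ/2 ≤ ℓ := by omega
        omega)
      apply hfree
      refine ⟨fun a => if a = m+1 then z else F a, ?_, ?_⟩
      · intro a ha
        simp only []
        by_cases hat : a = m+1
        · rw [if_pos hat]
          exact hz
        · rw [if_neg hat]
          exact (hF.1 a (by omega)).mono (del_le _ _)
      · intro a b s u ha hb hs hu he
        simp only [] at he
        by_cases h1 : a = m+1 <;> by_cases h2 : b = m+1
        · omega
        · rw [if_pos h1, if_neg h2] at he
          exfalso
          have hbu : F b u ∈ PU F (m+1) ℓ := mem_PU.mpr ⟨b, by omega, u, hu, rfl⟩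
          rcases hzmem s hs with hzS | ⟨_, hzB⟩
          · have := (hF.1 b (by omega)).del_notmem (by omega) u hu
            rw [← he] at this
            exact this hzS
          · rw [he] at hzB
            exact hzB hbu
        · rw [if_neg h1, if_pos h2] at he
          exfalso
          have hau : F a s ∈ PU F (m+1) ℓ := mem_PU.mpr ⟨a, by omega, s, hs, rfl⟩
          rcases hzmem u hu with hzS | ⟨_, hzB⟩
          · have := (hF.1 a (by omega)).del_notmem (by omega) s hs
            rw [he] at this
            exact this hzS
          · rw [← he] at hzB
            exact hzB hau
        · rw [if_neg h1, if_neg h2] at he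
          exact hF.2 a b s u (by omega) (by omega) hs hu he
    have hDS' : 2 * ((m+1) * (ℓ/2)) * n ≤ DS G' + 2 * (k*k*(ℓ/2)*(ℓ/2)) + 2 * n := by
      have hdel : DS G ≤ DS G' + 2 * ((ℓ/2) * n) := by
        have h1 := DS_le_del_add G S
        rw [← hG'] at h1
        have h2 : ∑ u ∈ S, G.degree u ≤ (ℓ/2) * n := by
          calc ∑ u ∈ S, G.degree u ≤ S.card * n := sum_deg_le G S
            _ = (ℓ/2) * n := by rw [hScard]
        omega
      have e : 2*((m+1+1)*(ℓ/2))*n = 2*((m+1)*(ℓ/2))*n + 2*((ℓ/2)*n) := by ring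
      omega
    obtain ⟨f', hf'disj, hf'props⟩ := IH G' (by omega) hfree' hDS'
    have hSf' : ∀ i, Disjoint S (f' i) := by
      intro i
      rw [Finset.disjoint_right]
      intro v hv
      have hprops := hf'props i
      have hne : (commonNbhd G' ↑(f' i)).Nonempty := by
        rw [← Set.ncard_pos (Set.toFinite _)]
        have := hprops.2.2
        omega
      obtain ⟨w, hw⟩ := hne
      have := hw.2 v hv
      rw [hG', del_adj] at this
      exact this.2.2
    refine ⟨Fin.cons S f', ?_, ?_⟩
    · intro i j hij
      rcases Fin.eq_zero_or_eq_succ i with rfl | ⟨i', rfl⟩ <;>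
        rcases Fin.eq_zero_or_eq_succ j with rfl | ⟨j', rfl⟩
      · exact absurd rfl hij
      · rw [Fin.cons_zero, Fin.cons_succ]
        exact hSf' j'
      · rw [Fin.cons_succ, Fin.cons_zero]
        exact (hSf' i').symm
      · rw [Fin.cons_succ, Fin.cons_succ]
        exact hf'disj i' j' (fun h => hij (by rw [h]))
    · intro i
      rcases Fin.eq_zero_or_eq_succ i with rfl | ⟨i', rfl⟩
      · rw [Fin.cons_zero]
        exact ⟨hSX, hScard, hST⟩
      · rw [Fin.cons_succ]
        obtain ⟨h1, h2, h3⟩ := hf'props i'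
        refine ⟨h1, h2, le_trans h3 ?_⟩
        exact Set.ncard_le_ncard (commonNbhd_mono (del_le G S) _) (Set.toFinite _)


end Aux


set_option maxHeartbeats 2000000 in
/-- Lemma 2.2: after deleting fewer than `⌊ℓ/2⌋` vertices of `A`, one can still find
`k−1` disjoint `⌊ℓ/2⌋`-sets in `A` with large common neighborhoods. -/
theorem delete_vertices_still_kminus1_sets (k ℓ r n : ℕ)
    (hk : 2 ≤ k) (hℓ : 4 ≤ ℓ) (hr : 3 ≤ r)
    (hn : 4 * k ^ 2 * ℓ ^ 2 * (k * ℓ + r) * (ℓ / 2 + 1) * ℓ.choose (ℓ / 2) ≤ n)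
    (G : SimpleGraph (Fin n))
    (hfree : ¬ GContains G (kPaths k ℓ))
    (hE : (k * (ℓ / 2) - 1) * (n - k * (ℓ / 2) + 1) ≤ eCount G) :
    ∀ X : Finset (Fin n), ↑X ⊆ bigA n k ℓ G → X.card < ℓ / 2 →
      ∃ f : Fin (k - 1) → Finset (Fin n),
        (∀ i j, i ≠ j → Disjoint (f i) (f j)) ∧
        ∀ i, ↑(f i) ⊆ bigA n k ℓ G \ ↑X ∧ (f i).card = ℓ / 2 ∧
          nkQ n k ℓ ≤ ((commonNbhd G ↑(f i)).ncard : ℚ) := by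
  intro X hX hXcard
  classical
  have hmaster : 6 * ((ℓ - ℓ/2 + 1) * ℓ.choose (ℓ/2)) * (k*ℓ+1) + 9*(k*k*ℓ*ℓ) + 3 ≤ n :=
    master_ineq k ℓ r n hk hℓ hr hn
  set E := (ℓ - ℓ/2 + 1) * ℓ.choose (ℓ/2) with hEdef
  have hEpos : 0 < E := by
    rw [hEdef]
    exact Nat.mul_pos (by omega) (Nat.choose_pos (by omega))
  obtain ⟨q, hq⟩ : ∃ q, q = n/(3*E) := ⟨_, rfl⟩
  have hdm : 3*E*q + n % (3*E) = n := by
    rw [hq]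
    exact Nat.div_add_mod n (3*E)
  have hmod : n % (3*E) < 3*E := Nat.mod_lt n (by omega)
  have hEqn : 3*E*q ≤ n := by omega
  set T := q + k*ℓ + 1 with hTdef
  have hT : k*ℓ + 1 ≤ T := by omega
  have hM : 2 * (E * T) + 3*(k*k*ℓ*ℓ) + 1 ≤ n := by
    have e2 : 2*(E*T) = 2*(E*q) + 2*(E*(k*ℓ+1)) := by rw [hTdef]; ring
    have h3 : 3 * (2*(E*T) + 3*(k*k*ℓ*ℓ) + 1) ≤ 3 * n := by
      have e4 : 3 * (2*(E*T) + 3*(k*k*ℓ*ℓ) + 1)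
          = 6*(E*q) + 6*(E*(k*ℓ+1)) + (9*(k*k*ℓ*ℓ) + 3) := by rw [e2]; ring
      have e5 : 6 * E * (k*ℓ+1) = 6*(E*(k*ℓ+1)) := by ring
      have e6 : 3*E*q = 3*(E*q) := by ring
      omega
    exact Nat.le_of_mul_le_mul_left h3 (by omega)
  have hMr : 2 * ((ℓ - ℓ/2 + 1) * (ℓ.choose (ℓ/2) * T)) + 3*(k*k*ℓ*ℓ) + 1 ≤ n := by
    have e : (ℓ - ℓ/2 + 1) * (ℓ.choose (ℓ/2) * T) = E*T := by rw [hEdef]; ring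
    omega
  have hfree' : ¬ ∃ F, DisjPaths G k ℓ F := fun ⟨_, hF⟩ => hfree hF.toGContains
  have hkln : k*ℓ ≤ n := by
    have h1 : k*ℓ ≤ (k*ℓ)*(k*ℓ) := by
      calc k*ℓ = (k*ℓ)*1 := by ring
        _ ≤ (k*ℓ)*(k*ℓ) := Nat.mul_le_mul_left _ (by nlinarith)
    have h2 : (k*ℓ)*(k*ℓ) = k*k*ℓ*ℓ := by ring
    omega
  have ha4 : 2*2 ≤ k*(ℓ/2) := Nat.mul_le_mul hk (by omega)
  have han : k*(ℓ/2) ≤ n := by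
    have : k*(ℓ/2) ≤ k*ℓ := Nat.mul_le_mul_left k (by omega)
    omega
  have hDSk : 2 * (k * (ℓ/2)) * n ≤ DS G + 2 * (k*k*(ℓ/2)*(ℓ/2)) + 2 * n := by
    rw [DS_eq_twice_eCount]
    zify [show 1 ≤ k*(ℓ/2) by omega, han] at hE ⊢
    nlinarith [hE, show ((4:ℤ)) ≤ (k:ℤ)*((ℓ/2 : ℕ):ℤ) from by exact_mod_cast ha4]
  have ek : k - 1 + 1 = k := by omega
  have hfreer : ¬ ∃ F, DisjPaths G ((k-1)+1) ℓ F := by rw [ek]; exact hfree'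
  have hDSr : 2 * (((k-1)+1) * (ℓ/2)) * n ≤ DS G + 2 * (k*k*(ℓ/2)*(ℓ/2)) + 2 * n := by
    rw [ek]; exact hDSk
  obtain ⟨f, hdisj, hprops⟩ := rec_lemma k ℓ T hk hℓ X (by omega) hT hMr (k-1) (by omega)
    G (by omega) hfreer hDSr
  have hnkT : nkQ n k ℓ ≤ (T : ℚ) := by
    rw [nkQ]
    have hden : (((ℓ + 1) / 2 + 1 : ℕ) : ℚ) * ((ℓ.choose (ℓ / 2)) : ℚ) = (E : ℚ) := by
      have e : (ℓ + 1) / 2 + 1 = ℓ - ℓ/2 + 1 := by omega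
      rw [hEdef, e]
      push_cast
      ring
    rw [hden]
    have hEQpos : (0:ℚ) < (E:ℚ) := by exact_mod_cast hEpos
    have hstep1 : ((n:ℚ)/3 - (ℓ.choose 2 : ℚ))/(E:ℚ) ≤ ((n:ℚ)/3)/(E:ℚ) := by
      gcongr
      exact sub_le_self _ (by positivity)
    have hstep2 : ((n:ℚ)/3)/(E:ℚ) = (n:ℚ)/(3*(E:ℚ)) := by
      rw [div_div]
    have hq2 : (n:ℚ)/(3*(E:ℚ)) ≤ (q:ℚ) + 1 := by
      rw [div_le_iff₀ (by positivity)]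
      have h1 : n < 3*E*q + 3*E := by omega
      have h1Q : (n:ℚ) < 3*(E:ℚ)*(q:ℚ) + 3*(E:ℚ) := by exact_mod_cast h1
      nlinarith [h1Q]
    have hTQ : (T:ℚ) = (q:ℚ) + (k:ℚ)*(ℓ:ℚ) + 1 := by
      rw [hTdef]
      push_cast
      ring
    calc ((n:ℚ)/3 - (ℓ.choose 2 : ℚ))/(E:ℚ) + (k:ℚ)*(ℓ:ℚ)
        ≤ (n:ℚ)/(3*(E:ℚ)) + (k:ℚ)*(ℓ:ℚ) := by
          rw [← hstep2]
          exact add_le_add hstep1 (le_refl _)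
      _ ≤ ((q:ℚ) + 1) + (k:ℚ)*(ℓ:ℚ) := add_le_add hq2 (le_refl _)
      _ = (T:ℚ) := by rw [hTQ]; ring
  refine ⟨f, hdisj, ?_⟩
  intro i
  obtain ⟨hXi, hcardi, hcomi⟩ := hprops i
  have hcomQ : nkQ n k ℓ ≤ ((commonNbhd G ↑(f i)).ncard : ℚ) := by
    calc nkQ n k ℓ ≤ (T:ℚ) := hnkT
      _ ≤ _ := by exact_mod_cast hcomi
  refine ⟨?_, hcardi, hcomQ⟩
  intro v hv
  have hvF : v ∈ f i := hv
  constructor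
  · exact ⟨f i, hvF, hcardi, hcomQ⟩
  · intro hvX
    exact hXi v hvX hvF
end
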